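/- arXiv:2110.07648 — 2 statements merged into one kernel-verified Lean document; each statement's English description precedes it below -/
import Mathlib

section
/- Let X and Y be disjoint finite sets and let Q = Q(X∪Y) be a blue/red colored Boolean lattice with no blue copy of Λ. If the vertex (∅, ∅) is not embeddable, then there is a monochromatic blue weak Y-shrub in Q. -/
/-- With blue/red coloring `c` (blue = `true`, red = `false`) of the Boolean lattice on a
ground set partitioned into `X ∪ Y`, there is a red `X`-good copy of `Q(X)`: an embedding
`φ` of `Q(X)` with all images red and `φ(A) ∩ X = A` for all `A ⊆ X`. -/
def RedXGoodCopy {V : Type*} [DecidableEq V] (c : Finset V → Bool) (X : Finset V) : Prop :=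
  ∃ φ : Finset V → Finset V,
    (∀ A B : Finset V, A ⊆ X → B ⊆ X → (A ⊆ B ↔ φ A ⊆ φ B)) ∧
    (∀ A : Finset V, A ⊆ X → φ A ∩ X = A) ∧
    (∀ A : Finset V, A ⊆ X → c (φ A) = false)

/-- `S` is an ordered subset of `Y`: a sequence of distinct elements of `Y`
(a vertex of the factorial tree `O(Y)`, ordered by the prefix relation `<+:`). -/
def OrdSubset {V : Type*} (Y : Finset V) (S : List V) : Prop :=
  S.Nodup ∧ ∀ v ∈ S, v ∈ Y

/-- `τ` is a `Y`-good embedding of the factorial tree `O(Y)` into the Boolean lattice: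
for ordered subsets `S, T` of `Y`, `S` is a prefix of `T` iff `τ S ⊆ τ T`, and
`τ S ∩ Y` is the underlying set of `S`. Its image is a `Y`-shrub. -/
def IsShrubMap {V : Type*} [DecidableEq V] (Y : Finset V) (τ : List V → Finset V) : Prop :=
  (∀ S T : List V, OrdSubset Y S → OrdSubset Y T → (S <+: T ↔ τ S ⊆ τ T)) ∧
  (∀ S : List V, OrdSubset Y S → τ S ∩ Y = S.toFinset)

/-- `τ` determines a weak `Y`-shrub: `τ S ∩ Y` is the underlying set of `S` for every
ordered subset `S` of `Y`, and `τ S ⊊ τ T` whenever `S` is a strict prefix of `T`. -/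
def IsWeakShrubMap {V : Type*} [DecidableEq V] (Y : Finset V) (τ : List V → Finset V) : Prop :=
  (∀ S T : List V, OrdSubset Y S → OrdSubset Y T → S <+: T → S ≠ T → τ S ⊂ τ T) ∧
  (∀ S : List V, OrdSubset Y S → τ S ∩ Y = S.toFinset)

/-- There is a monochromatic blue `Y`-shrub (blue = `true`). -/
def BlueYShrub {V : Type*} [DecidableEq V] (c : Finset V → Bool) (Y : Finset V) : Prop :=
  ∃ τ : List V → Finset V, IsShrubMap Y τ ∧ ∀ S : List V, OrdSubset Y S → c (τ S) = true

/-- The coloring `c` admits no blue copy of the poset `Λ`: there are no blue vertices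
`A, B, C` with `A ⊂ C`, `B ⊂ C` and `A`, `B` incomparable. -/
def NoBlueLambda {V : Type*} (c : Finset V → Bool) : Prop :=
  ¬ ∃ A B C : Finset V, c A = true ∧ c B = true ∧ c C = true ∧
      A ⊂ C ∧ B ⊂ C ∧ ¬ A ⊆ B ∧ ¬ B ⊆ A

/-- For `X0 ⊆ X` and `Y0 ⊆ Y`, the vertex `(X0, Y0) = X0 ∪ Y0` is embeddable: there is a
map `φ` defined on `{X' : X0 ⊆ X' ⊆ X}` into the lattice with `X1 ⊆ X2` iff `φ X1 ⊆ φ X2`,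
all images red (`false`), `φ X' ∩ X = X'` for all such `X'`, and `φ X0 ⊇ X0 ∪ Y0`. -/
def Embeddable {V : Type*} [DecidableEq V] (c : Finset V → Bool) (X : Finset V)
    (X0 Y0 : Finset V) : Prop :=
  ∃ φ : Finset V → Finset V,
    (∀ A B : Finset V, X0 ⊆ A → A ⊆ X → X0 ⊆ B → B ⊆ X → (A ⊆ B ↔ φ A ⊆ φ B)) ∧
    (∀ A : Finset V, X0 ⊆ A → A ⊆ X → c (φ A) = false) ∧
    (∀ A : Finset V, X0 ⊆ A → A ⊆ X → φ A ∩ X = A) ∧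
    X0 ∪ Y0 ⊆ φ X0

lemma keyL {V : Type*} [DecidableEq V] [Fintype V] (X Y : Finset V) (hd : Disjoint X Y)
    (c : Finset V → Bool) (hΛ : NoBlueLambda c) (X0 Y0 : Finset V)
    (hX0 : X0 ⊆ X) (hY0 : Y0 ⊆ Y) (hne : ¬ Embeddable c X X0 Y0) :
    ∃ X1, X0 ⊆ X1 ∧ X1 ⊆ X ∧ c (X1 ∪ Y0) = true ∧
      ∀ y ∈ Y, y ∉ Y0 → ¬ Embeddable c X X1 (insert y Y0) := by
  classical
  by_contra hcon
  push_neg at hcon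
  apply hne
  set Sset : Finset (Finset V) :=
    Finset.univ.filter (fun A => X0 ⊆ A ∧ A ⊆ X ∧ c (A ∪ Y0) = true) with hSdef
  have memS : ∀ {A : Finset V}, A ∈ Sset ↔ X0 ⊆ A ∧ A ⊆ X ∧ c (A ∪ Y0) = true := by
    intro A; simp [hSdef]
  set Mset : Finset (Finset V) :=
    Sset.filter (fun M => ∀ A ∈ Sset, A ⊆ M → A = M) with hMdef
  have memM : ∀ {M : Finset V}, M ∈ Mset → M ∈ Sset ∧ ∀ A ∈ Sset, A ⊆ M → A = M := by
    intro M hM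
    simpa [hMdef] using hM
  have hmin : ∀ A ∈ Sset, ∃ M ∈ Mset, M ⊆ A := by
    intro A hA
    obtain ⟨m, hm, hmmin'⟩ :=
      Finset.exists_minimal (s := Sset.filter (fun B => B ⊆ A)) ⟨A, by simp [hA]⟩
    replace hm : m ∈ Sset.filter (fun B => B ⊆ A) := hm
    have hmmin : ∀ x ∈ Sset.filter (fun B => B ⊆ A), ¬ x < m :=
      fun x hx hlt => hlt.not_ge (hmmin' hx hlt.le)
    rw [Finset.mem_filter] at hm
    refine ⟨m, ?_, hm.2⟩
    rw [hMdef, Finset.mem_filter]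
    refine ⟨hm.1, fun B hB hBm => ?_⟩
    by_contra hne'
    exact hmmin B (Finset.mem_filter.mpr ⟨hB, hBm.trans hm.2⟩) (lt_of_le_of_ne hBm hne')
  have hsel : ∀ M ∈ Mset, ∃ (y : V) (ψ : Finset V → Finset V),
      y ∈ Y ∧ y ∉ Y0 ∧
      (∀ A B : Finset V, M ⊆ A → A ⊆ X → M ⊆ B → B ⊆ X → (A ⊆ B ↔ ψ A ⊆ ψ B)) ∧
      (∀ A : Finset V, M ⊆ A → A ⊆ X → c (ψ A) = false) ∧
      (∀ A : Finset V, M ⊆ A → A ⊆ X → ψ A ∩ X = A) ∧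
      M ∪ insert y Y0 ⊆ ψ M := by
    intro M hM
    obtain ⟨h1, h2, h3⟩ := memS.mp (memM hM).1
    obtain ⟨y, hy, hynot, hemb⟩ := hcon M h1 h2 h3
    obtain ⟨ψ, p1, p2, p3, p4⟩ := hemb
    exact ⟨y, ψ, hy, hynot, p1, p2, p3, p4⟩
  choose yf ψf hyY hyY0 hiff hred hcap hcont using hsel
  have hXm : ∀ M : {M // M ∈ Mset}, X0 ⊆ M.1 ∧ M.1 ⊆ X ∧ c (M.1 ∪ Y0) = true :=
    fun M => memS.mp (memM M.2).1
  set f : Finset V → Finset {M // M ∈ Mset} :=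
    fun A => Mset.attach.filter (fun M => (M : Finset V) ⊆ A) with hfdef
  have memf : ∀ (M : {M // M ∈ Mset}) (A : Finset V), M ∈ f A ↔ M.1 ⊆ A := by
    intro M A; simp [hfdef]
  set Φ : Finset V → Finset V := fun A =>
    A ∪ Y0 ∪ (f A).sup (fun M => ψf M.1 M.2 A) with hΦdef
  have hAΦ : ∀ A : Finset V, A ∪ Y0 ⊆ Φ A := fun A => Finset.subset_union_left
  have hψM : ∀ (M : {M // M ∈ Mset}) (A : Finset V), M.1 ⊆ A → A ⊆ X →
      ψf M.1 M.2 M.1 ⊆ ψf M.1 M.2 A := by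
    intro M A hMA hAX
    exact (hiff M.1 M.2 M.1 A Finset.Subset.rfl (hXm M).2.1 hMA hAX).mp hMA
  have hψA : ∀ (M : {M // M ∈ Mset}) (A : Finset V), M.1 ⊆ A → A ⊆ X →
      A ∪ Y0 ⊆ ψf M.1 M.2 A := by
    intro M A hMA hAX
    have hc' := hcap M.1 M.2 A hMA hAX
    apply Finset.union_subset
    · intro x hx
      have hx' : x ∈ ψf M.1 M.2 A ∩ X := by rw [hc']; exact hx
      exact (Finset.mem_inter.mp hx').1
    · refine Finset.Subset.trans ?_ (hψM M A hMA hAX)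
      refine Finset.Subset.trans ?_ (hcont M.1 M.2)
      intro x hx
      exact Finset.mem_union_right _ (Finset.mem_insert_of_mem hx)
  have hyin : ∀ (M : {M // M ∈ Mset}) (A : Finset V), M.1 ⊆ A → A ⊆ X →
      yf M.1 M.2 ∈ ψf M.1 M.2 A := by
    intro M A hMA hAX
    apply hψM M A hMA hAX
    exact hcont M.1 M.2 (Finset.mem_union_right _ (Finset.mem_insert_self _ _))
  have hcapΦ : ∀ A : Finset V, X0 ⊆ A → A ⊆ X → Φ A ∩ X = A := by
    intro A hX0A hAX
    apply Finset.Subset.antisymm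
    · intro x hx
      rw [Finset.mem_inter] at hx
      obtain ⟨hx1, hx2⟩ := hx
      simp only [hΦdef, Finset.mem_union] at hx1
      rcases hx1 with (hx1 | hx1) | hx1
      · exact hx1
      · exact absurd (hY0 hx1) (Finset.disjoint_left.mp hd hx2)
      · obtain ⟨M, hMf, hxψ⟩ := Finset.mem_sup.mp hx1
        have hMA : M.1 ⊆ A := (memf M A).mp hMf
        have hc' := hcap M.1 M.2 A hMA hAX
        rw [← hc']
        exact Finset.mem_inter.mpr ⟨hxψ, hx2⟩
    · intro x hx
      exact Finset.mem_inter.mpr ⟨hAΦ A (Finset.mem_union_left _ hx), hAX hx⟩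
  have hmono : ∀ A B : Finset V, A ⊆ X → B ⊆ X → A ⊆ B → Φ A ⊆ Φ B := by
    intro A B hAX hBX hAB
    simp only [hΦdef]
    apply Finset.union_subset
    · exact Finset.Subset.trans (Finset.union_subset_union hAB Finset.Subset.rfl)
        Finset.subset_union_left
    · refine Finset.Subset.trans ?_ (Finset.subset_union_right)
      rw [← Finset.le_iff_subset]
      apply Finset.sup_le
      intro M hMf
      have hMA : M.1 ⊆ A := (memf M A).mp hMf
      have hMB : M ∈ f B := (memf M B).mpr (hMA.trans hAB)
      refine le_trans ?_ (Finset.le_sup hMB)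
      rw [Finset.le_iff_subset]
      exact (hiff M.1 M.2 A B hMA hAX (hMA.trans hAB) hBX).mp hAB
  have hredΦ : ∀ A : Finset V, X0 ⊆ A → A ⊆ X → c (Φ A) = false := by
    intro A hX0A hAX
    rcases (f A).eq_empty_or_nonempty with hfe | ⟨M0, hM0⟩
    · have hΦeq : Φ A = A ∪ Y0 := by
        simp only [hΦdef, hfe]
        simp
      rw [hΦeq]
      cases hcb : c (A ∪ Y0)
      · rfl
      · exfalso
        obtain ⟨M, hMm, hMA⟩ := hmin A (memS.mpr ⟨hX0A, hAX, hcb⟩)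
        have : (⟨M, hMm⟩ : {M // M ∈ Mset}) ∈ f A := (memf _ _).mpr hMA
        rw [hfe] at this
        exact absurd this (Finset.notMem_empty _)
    · have hM0A : M0.1 ⊆ A := (memf M0 A).mp hM0
      by_cases hall : ∀ M ∈ f A, (M : {M // M ∈ Mset}).1 = M0.1
      · have hsup : (f A).sup (fun M => ψf M.1 M.2 A) = ψf M0.1 M0.2 A := by
          apply le_antisymm
          · apply Finset.sup_le
            intro M hMf
            have hMe : M = M0 := Subtype.ext (hall M hMf)
            rw [hMe]
          · exact Finset.le_sup (f := fun M => ψf M.1 M.2 A) hM0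
        have hΦeq : Φ A = ψf M0.1 M0.2 A := by
          simp only [hΦdef, hsup]
          exact Finset.union_eq_right.mpr (hψA M0 A hM0A hAX)
        rw [hΦeq]
        exact hred M0.1 M0.2 A hM0A hAX
      · push_neg at hall
        obtain ⟨M1, hM1f, hM1ne⟩ := hall
        have hM1A : M1.1 ⊆ A := (memf M1 A).mp hM1f
        cases hcb : c (Φ A)
        · rfl
        · exfalso
          apply hΛ
          have hsub : ∀ (M : {M // M ∈ Mset}), M.1 ⊆ A → M.1 ∪ Y0 ⊂ Φ A := by
            intro M hMA
            rw [Finset.ssubset_def]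
            constructor
            · exact Finset.Subset.trans
                (Finset.union_subset_union hMA Finset.Subset.rfl) (hAΦ A)
            · intro hcontra
              have hyΦ : yf M.1 M.2 ∈ Φ A := by
                have h1 : yf M.1 M.2 ∈ ψf M.1 M.2 A := hyin M A hMA hAX
                have h2 : ψf M.1 M.2 A ⊆ (f A).sup (fun M => ψf M.1 M.2 A) := by
                  rw [← Finset.le_iff_subset]
                  exact Finset.le_sup (f := fun M => ψf M.1 M.2 A) ((memf M A).mpr hMA)
                exact Finset.mem_union_right _ (h2 h1)
              have := hcontra hyΦ
              rcases Finset.mem_union.mp this with h | h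
              · exact absurd (hyY M.1 M.2)
                  (Finset.disjoint_left.mp hd ((hXm M).2.1 h))
              · exact hyY0 M.1 M.2 h
          have hinc : ∀ (M M' : {M // M ∈ Mset}), M.1 ≠ M'.1 →
              ¬ (M.1 ∪ Y0 ⊆ M'.1 ∪ Y0) := by
            intro M M' hne' hsub'
            have hMM' : M.1 ⊆ M'.1 := by
              intro x hx
              rcases Finset.mem_union.mp (hsub' (Finset.mem_union_left _ hx)) with h | h
              · exact h
              · exact absurd (hY0 h) (Finset.disjoint_left.mp hd ((hXm M).2.1 hx))
            exact hne' ((memM M'.2).2 M.1 (memM M.2).1 hMM')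
          exact ⟨M0.1 ∪ Y0, M1.1 ∪ Y0, Φ A, (hXm M0).2.2, (hXm M1).2.2, hcb,
            hsub M0 hM0A, hsub M1 hM1A, hinc M0 M1 (Ne.symm hM1ne), hinc M1 M0 hM1ne⟩
  refine ⟨Φ, ?_, hredΦ, hcapΦ, hAΦ X0⟩
  intro A B hX0A hAX hX0B hBX
  constructor
  · exact hmono A B hAX hBX
  · intro hΦAB
    have h1 := hcapΦ A hX0A hAX
    have h2 := hcapΦ B hX0B hBX
    calc A = Φ A ∩ X := h1.symm
      _ ⊆ Φ B ∩ X := Finset.inter_subset_inter hΦAB Finset.Subset.rfl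
      _ = B := h2

section Rec

variable {V : Type*} [DecidableEq V] [Fintype V]

noncomputable def stepAux (X Y : Finset V) (hd : Disjoint X Y) (c : Finset V → Bool)
    (hΛ : NoBlueLambda c) (X0 Y0 : Finset V) : Finset V :=
  letI := Classical.dec (X0 ⊆ X ∧ Y0 ⊆ Y ∧ ¬ Embeddable c X X0 Y0)
  if h : X0 ⊆ X ∧ Y0 ⊆ Y ∧ ¬ Embeddable c X X0 Y0 then
    Classical.choose (keyL X Y hd c hΛ X0 Y0 h.1 h.2.1 h.2.2)
  else ∅

lemma stepAux_spec (X Y : Finset V) (hd : Disjoint X Y) (c : Finset V → Bool)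
    (hΛ : NoBlueLambda c) (X0 Y0 : Finset V)
    (h : X0 ⊆ X ∧ Y0 ⊆ Y ∧ ¬ Embeddable c X X0 Y0) :
    X0 ⊆ stepAux X Y hd c hΛ X0 Y0 ∧ stepAux X Y hd c hΛ X0 Y0 ⊆ X ∧
      c (stepAux X Y hd c hΛ X0 Y0 ∪ Y0) = true ∧
      ∀ y ∈ Y, y ∉ Y0 → ¬ Embeddable c X (stepAux X Y hd c hΛ X0 Y0) (insert y Y0) := by
  unfold stepAux
  rw [dif_pos h]
  exact Classical.choose_spec (keyL X Y hd c hΛ X0 Y0 h.1 h.2.1 h.2.2)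

noncomputable def xsAux (X Y : Finset V) (hd : Disjoint X Y) (c : Finset V → Bool)
    (hΛ : NoBlueLambda c) : List V → Finset V
  | [] => stepAux X Y hd c hΛ ∅ ∅
  | y :: R => stepAux X Y hd c hΛ (xsAux X Y hd c hΛ R) (insert y R.toFinset)

lemma ordsubset_tail {Y : Finset V} {y : V} {R : List V} (h : OrdSubset Y (y :: R)) :
    OrdSubset Y R :=
  ⟨h.1.of_cons, fun v hv => h.2 v (List.mem_cons_of_mem _ hv)⟩

lemma xsAux_spec (X Y : Finset V) (hd : Disjoint X Y) (c : Finset V → Bool)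
    (hΛ : NoBlueLambda c) (hne : ¬ Embeddable c X ∅ ∅) :
    ∀ R : List V, OrdSubset Y R →
      xsAux X Y hd c hΛ R ⊆ X ∧
      c (xsAux X Y hd c hΛ R ∪ R.toFinset) = true ∧
      (∀ y ∈ Y, y ∉ R.toFinset →
        ¬ Embeddable c X (xsAux X Y hd c hΛ R) (insert y R.toFinset)) := by
  intro R
  induction R with
  | nil =>
    intro _
    have h : (∅ : Finset V) ⊆ X ∧ (∅ : Finset V) ⊆ Y ∧ ¬ Embeddable c X ∅ ∅ :=
      ⟨Finset.empty_subset _, Finset.empty_subset _, hne⟩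
    obtain ⟨h1, h2, h3, h4⟩ := stepAux_spec X Y hd c hΛ ∅ ∅ h
    refine ⟨h2, ?_, ?_⟩
    · simpa [xsAux] using h3
    · simpa [xsAux] using h4
  | cons y R ih =>
    intro hord
    have hordR := ordsubset_tail hord
    obtain ⟨ih1, ih2, ih3⟩ := ih hordR
    have hyY : y ∈ Y := hord.2 y List.mem_cons_self
    have hynR : y ∉ R.toFinset := by
      rw [List.mem_toFinset]
      exact (List.nodup_cons.mp hord.1).1
    have hYsub : insert y R.toFinset ⊆ Y := by
      intro v hv
      rcases Finset.mem_insert.mp hv with h | h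
      · exact h ▸ hyY
      · exact hordR.2 v (List.mem_toFinset.mp h)
    have h : xsAux X Y hd c hΛ R ⊆ X ∧ insert y R.toFinset ⊆ Y ∧
        ¬ Embeddable c X (xsAux X Y hd c hΛ R) (insert y R.toFinset) :=
      ⟨ih1, hYsub, ih3 y hyY hynR⟩
    obtain ⟨h1, h2, h3, h4⟩ := stepAux_spec X Y hd c hΛ _ _ h
    refine ⟨h2, ?_, ?_⟩
    · simpa [xsAux, List.toFinset_cons] using h3
    · intro y' hy' hy'n
      rw [List.toFinset_cons] at hy'n ⊢
      show ¬ Embeddable c X (xsAux X Y hd c hΛ (y :: R)) (insert y' (insert y R.toFinset))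
      simpa [xsAux] using h4 y' hy' hy'n

lemma xsAux_mono_cons (X Y : Finset V) (hd : Disjoint X Y) (c : Finset V → Bool)
    (hΛ : NoBlueLambda c) (hne : ¬ Embeddable c X ∅ ∅) (y : V) (R : List V)
    (hord : OrdSubset Y (y :: R)) :
    xsAux X Y hd c hΛ R ⊆ xsAux X Y hd c hΛ (y :: R) := by
  have hordR := ordsubset_tail hord
  obtain ⟨ih1, ih2, ih3⟩ := xsAux_spec X Y hd c hΛ hne R hordR
  have hyY : y ∈ Y := hord.2 y List.mem_cons_self
  have hynR : y ∉ R.toFinset := by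
    rw [List.mem_toFinset]; exact (List.nodup_cons.mp hord.1).1
  have hYsub : insert y R.toFinset ⊆ Y := by
    intro v hv
    rcases Finset.mem_insert.mp hv with h | h
    · exact h ▸ hyY
    · exact hordR.2 v (List.mem_toFinset.mp h)
  obtain ⟨h1, _, _, _⟩ := stepAux_spec X Y hd c hΛ (xsAux X Y hd c hΛ R)
    (insert y R.toFinset) ⟨ih1, hYsub, ih3 y hyY hynR⟩
  simpa [xsAux] using h1

lemma xsAux_mono_append (X Y : Finset V) (hd : Disjoint X Y) (c : Finset V → Bool)
    (hΛ : NoBlueLambda c) (hne : ¬ Embeddable c X ∅ ∅) :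
    ∀ (L R : List V), OrdSubset Y (L ++ R) →
      xsAux X Y hd c hΛ R ⊆ xsAux X Y hd c hΛ (L ++ R) := by
  intro L
  induction L with
  | nil => intro R _; simp
  | cons a L ih =>
    intro R hord
    have h1 := ih R (ordsubset_tail hord)
    exact h1.trans (xsAux_mono_cons X Y hd c hΛ hne a (L ++ R) hord)

lemma ordsubset_reverse {Y : Finset V} {S : List V} (h : OrdSubset Y S) :
    OrdSubset Y S.reverse :=
  ⟨List.nodup_reverse.mpr h.1, fun v hv => h.2 v (List.mem_reverse.mp hv)⟩

end Rec

/-- Let `X`, `Y` be disjoint sets and let `Q(X ∪ Y)` be blue/red colored with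
no blue copy of `Λ`. If the vertex `(∅, ∅)` is not embeddable, then there is a
monochromatic blue weak `Y`-shrub in `Q(X ∪ Y)`. -/
theorem statement18 {V : Type*} [DecidableEq V] [Fintype V]
    (X Y : Finset V) (hd : Disjoint X Y) (hc : X ∪ Y = Finset.univ)
    (c : Finset V → Bool) (hΛ : NoBlueLambda c)
    (hne : ¬ Embeddable c X ∅ ∅) :
    ∃ τ : List V → Finset V, IsWeakShrubMap Y τ ∧
      ∀ S : List V, OrdSubset Y S → c (τ S) = true := by
  classical
  set τ : List V → Finset V :=
    fun S => xsAux X Y hd c hΛ S.reverse ∪ S.toFinset with hτdef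
  have hcap : ∀ S : List V, OrdSubset Y S → τ S ∩ Y = S.toFinset := by
    intro S hS
    have hx := (xsAux_spec X Y hd c hΛ hne S.reverse (ordsubset_reverse hS)).1
    simp only [hτdef]
    rw [Finset.union_inter_distrib_right]
    have h1 : xsAux X Y hd c hΛ S.reverse ∩ Y = ∅ := by
      rw [← Finset.disjoint_iff_inter_eq_empty]
      exact hd.mono_left hx
    have h2 : S.toFinset ∩ Y = S.toFinset := by
      rw [Finset.inter_eq_left]
      intro v hv
      exact hS.2 v (List.mem_toFinset.mp hv)
    rw [h1, h2, Finset.empty_union]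
  refine ⟨τ, ⟨?_, hcap⟩, ?_⟩
  · intro S T hS hT hpre hneST
    obtain ⟨U, rfl⟩ := hpre
    have hUne : U ≠ [] := by
      intro h
      exact hneST (by simp [h])
    have hordrev : OrdSubset Y (U.reverse ++ S.reverse) := by
      have := ordsubset_reverse hT
      rwa [List.reverse_append] at this
    have hsubX : xsAux X Y hd c hΛ S.reverse ⊆ xsAux X Y hd c hΛ (S ++ U).reverse := by
      rw [List.reverse_append]
      exact xsAux_mono_append X Y hd c hΛ hne U.reverse S.reverse hordrev
    have hsubτ : τ S ⊆ τ (S ++ U) := by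
      simp only [hτdef]
      apply Finset.union_subset
      · exact hsubX.trans Finset.subset_union_left
      · refine Finset.Subset.trans ?_ Finset.subset_union_right
        rw [List.toFinset_append]
        exact Finset.subset_union_left
    obtain ⟨u, hu⟩ := List.exists_mem_of_ne_nil U hUne
    have huY : u ∈ Y := hT.2 u (List.mem_append_right _ hu)
    have hunS : u ∉ S := by
      have := (List.nodup_append'.mp hT.1).2.2
      intro huS
      exact this huS hu
    have huτT : u ∈ τ (S ++ U) := by
      simp only [hτdef]
      apply Finset.mem_union_right
      rw [List.mem_toFinset]
      exact List.mem_append_right _ hu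
    have huτS : u ∉ τ S := by
      intro huS
      have : u ∈ τ S ∩ Y := Finset.mem_inter.mpr ⟨huS, huY⟩
      rw [hcap S hS] at this
      exact hunS (List.mem_toFinset.mp this)
    rw [Finset.ssubset_def]
    exact ⟨hsubτ, fun hcontra => huτS (hcontra huτT)⟩
  · intro S hS
    have h := (xsAux_spec X Y hd c hΛ hne S.reverse (ordsubset_reverse hS)).2.1
    simpa only [hτdef, List.toFinset_reverse] using h
end

section
/- There exists N0 ∈ ℕ such that for every integer N ≥ N0 the following holds. Let k = ⌊(10/216)·(N / ln N)⌋ and Q = Q([N]). Then there exists a blue/red coloring of Q which contains no blue copy of Λ and such that for every k-element subset Y ⊆ [N], there is a blue Y-shrub in Q (with respect to the partition [N] = ([N]\Y) ∪ Y). -/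
set_option maxRecDepth 100000

namespace S19
open Finset

-- parameters
noncomputable def kk (N : ℕ) : ℕ := ⌊(10 / 216 : ℝ) * (N / Real.log N)⌋₊
def LB (N : ℕ) : ℕ := Nat.clog 2 N
def ss (N : ℕ) : ℕ := LB N / 3 + 1
noncomputable def ZT (N : ℕ) : ℕ := 8 * ss N * kk N
noncomputable def HH (N : ℕ) : ℕ := ZT N + kk N
noncomputable def num (N : ℕ) : ℕ := (N - HH N) / 2
noncomputable def DD (N : ℕ) : ℕ := kk N + kk N * ss N

section Arith
variable {N : ℕ}

lemma hN2 (hN : 2^150 ≤ N) : (2:ℕ) ≤ N := le_trans (by norm_num) hN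

lemma hNR (hN : 2^150 ≤ N) : (2:ℝ)^150 ≤ (N:ℝ) := by exact_mod_cast hN

lemma logN_pos (hN : 2^150 ≤ N) : (0:ℝ) < Real.log N := by
  apply Real.log_pos
  have := hN2 hN
  exact_mod_cast by omega

lemma log_ge_103 (hN : 2^150 ≤ N) : (103:ℝ) ≤ Real.log N := by
  have h1 : ((2:ℝ)^150) ≤ (N:ℝ) := hNR hN
  have h2 : Real.log ((2:ℝ)^150) ≤ Real.log N :=
    Real.log_le_log (by positivity) h1
  rw [Real.log_pow] at h2
  have l2 := Real.log_two_gt_d9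
  push_cast at h2
  nlinarith

lemma log_le_two_sqrt (hN : 2^150 ≤ N) : Real.log N ≤ 2 * Real.sqrt N := by
  have hNpos : (0:ℝ) < (N:ℝ) := by
    have := hNR hN; nlinarith
  have hs : (0:ℝ) < Real.sqrt N := Real.sqrt_pos.mpr hNpos
  have h := Real.log_le_sub_one_of_pos hs
  have h2 : Real.log (Real.sqrt N) = Real.log N / 2 := Real.log_sqrt (le_of_lt hNpos)
  nlinarith

lemma sqrt_le (hN : 2^150 ≤ N) : Real.sqrt N ≤ (N:ℝ) / 2^70 := by
  have h140 : ((2:ℝ)^70)^2 ≤ (N:ℝ) := by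
    have := hNR hN; nlinarith
  have h1 : (2:ℝ)^70 ≤ Real.sqrt N := (Real.le_sqrt' (by positivity)).mpr h140
  have h2 : Real.sqrt N * Real.sqrt N = N := Real.mul_self_sqrt (by positivity)
  rw [le_div_iff₀ (by positivity : (0:ℝ) < 2^70)]
  nlinarith [Real.sqrt_nonneg (N:ℝ)]

lemma kk_logN (hN : 2^150 ≤ N) : (kk N : ℝ) * Real.log N ≤ (10/216) * N := by
  have hL := logN_pos hN
  have h : (kk N : ℝ) ≤ (10/216) * ((N:ℝ) / Real.log N) :=
    Nat.floor_le (by positivity)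
  calc (kk N : ℝ) * Real.log N ≤ ((10/216) * ((N:ℝ) / Real.log N)) * Real.log N :=
        mul_le_mul_of_nonneg_right h (le_of_lt hL)
    _ = (10/216) * N := by field_simp

lemma kk_logN_ge (hN : 2^150 ≤ N) : (10/216) * (N:ℝ) - Real.log N ≤ (kk N : ℝ) * Real.log N := by
  have hL := logN_pos hN
  have h : (10/216) * ((N:ℝ) / Real.log N) < kk N + 1 := Nat.lt_floor_add_one _
  have h2 : (10/216) * (N:ℝ) < ((kk N : ℝ) + 1) * Real.log N := by
    calc (10/216) * (N:ℝ) = ((10/216) * ((N:ℝ) / Real.log N)) * Real.log N := by field_simp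
      _ < ((kk N : ℝ) + 1) * Real.log N := by
          exact mul_lt_mul_of_pos_right h hL
  nlinarith

lemma kk_pos (hN : 2^150 ≤ N) : 1 ≤ kk N := by
  have hL := logN_pos hN
  have h1 : Real.log N ≤ (N:ℝ)/22 := by
    have := log_le_two_sqrt hN
    have := sqrt_le hN
    have hNpos : (0:ℝ) ≤ (N:ℝ) := by positivity
    nlinarith
  apply Nat.le_floor
  have hNpos : (0:ℝ) < (N:ℝ) := by
    have := hNR hN; nlinarith
  push_cast
  have h22 : (22:ℝ) ≤ (N:ℝ)/Real.log N := by
    rw [le_div_iff₀ hL]; nlinarith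
  nlinarith

lemma LB_pow (hN : 2^150 ≤ N) : N ≤ 2^(LB N) := Nat.le_pow_clog one_lt_two N

lemma LB_pos (hN : 2^150 ≤ N) : 1 ≤ LB N := by
  have := hN2 hN
  exact Nat.clog_pos one_lt_two (by omega)

lemma logN_le_LB (hN : 2^150 ≤ N) : Real.log N ≤ (LB N : ℝ) * Real.log 2 := by
  have h := LB_pow hN
  have h2 : Real.log N ≤ Real.log ((2:ℝ)^(LB N)) := by
    apply Real.log_le_log
    · have := hNR hN; nlinarith
    · exact_mod_cast h
  rwa [Real.log_pow] at h2

lemma LB_le (hN : 2^150 ≤ N) : (LB N : ℝ) * Real.log 2 ≤ Real.log N + Real.log 2 := by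
  have h1 : 1 < N := by have := hN2 hN; omega
  have h := Nat.pow_pred_clog_lt_self one_lt_two h1
  have hLB := LB_pos hN
  have h2 : ((2:ℕ)^(LB N - 1) : ℝ) ≤ (N:ℝ) := by
    exact_mod_cast le_of_lt h
  have h3 : Real.log ((2:ℝ)^(LB N - 1)) ≤ Real.log N := by
    apply Real.log_le_log (by positivity)
    exact_mod_cast h2
  rw [Real.log_pow] at h3
  have h4 : ((LB N - 1 : ℕ) : ℝ) = (LB N : ℝ) - 1 := by
    push_cast [Nat.cast_sub hLB]; ring
  rw [h4] at h3
  nlinarith [Real.log_two_gt_d9]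

lemma kk_le_N' (hN : 2^150 ≤ N) : (kk N : ℝ) * 103 ≤ (10/216) * N := by
  have := kk_logN hN
  have := log_ge_103 hN
  nlinarith [Nat.cast_nonneg (α := ℝ) (kk N)]

-- master real inequality 1
lemma key_real (hN : 2^150 ≤ N) :
    10 * (kk N * LB N) + 45 * kk N + 4 * LB N + 6 ≤ N := by
  have l2lo := Real.log_two_gt_d9
  have l2hi := Real.log_two_lt_d9
  have hKL := kk_logN hN
  have hK103 := kk_le_N' hN
  have hBl2 := LB_le hN
  have hLs := log_le_two_sqrt hN
  have hsq := sqrt_le hN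
  have hL103 := log_ge_103 hN
  have hK0 : (0:ℝ) ≤ (kk N : ℝ) := Nat.cast_nonneg _
  have hB0 : (0:ℝ) ≤ (LB N : ℝ) := Nat.cast_nonneg _
  have hNbig : (2:ℝ)^150 ≤ (N:ℝ) := hNR hN
  have hN0 : (0:ℝ) ≤ (N:ℝ) := by nlinarith
  -- K*B*l2 ≤ K*L + K*l2 ≤ (10/216)N + K*l2
  have hKB : (kk N : ℝ) * (LB N) * Real.log 2 ≤ (10/216) * N + (kk N) * Real.log 2 := by
    have := mul_le_mul_of_nonneg_left hBl2 hK0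
    nlinarith
  -- goal in ℝ, multiplied by log 2
  have goalR : 10 * ((kk N : ℝ) * (LB N)) + 45 * kk N + 4 * LB N + 6 ≤ (N:ℝ) := by
    have hLsmall : Real.log N ≤ (N:ℝ) / 2^69 := by nlinarith
    have hKsmall : (kk N : ℝ) ≤ (N:ℝ) / 2224 := by nlinarith
    have hBsmall : (LB N : ℝ) * Real.log 2 ≤ (N:ℝ)/2^69 + 1 := by nlinarith
    -- multiply target by log 2 > 0.6931
    nlinarith [mul_le_mul_of_nonneg_left hBl2 (by norm_num : (0:ℝ) ≤ 4),
               hKB, hKsmall, hLsmall]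
  exact_mod_cast goalR

-- master real inequality 2 : lower bound
lemma key_real2 (hN : 2^150 ≤ N) : 9 * N ≤ 256 * (kk N * LB N + kk N) := by
  have l2lo := Real.log_two_gt_d9
  have l2hi := Real.log_two_lt_d9
  have hKLge := kk_logN_ge hN
  have hLB := logN_le_LB hN
  have hLs := log_le_two_sqrt hN
  have hsq := sqrt_le hN
  have hL103 := log_ge_103 hN
  have hK0 : (0:ℝ) ≤ (kk N : ℝ) := Nat.cast_nonneg _
  have hB0 : (0:ℝ) ≤ (LB N : ℝ) := Nat.cast_nonneg _
  have hNbig : (2:ℝ)^150 ≤ (N:ℝ) := hNR hN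
  have goalR : 9 * (N:ℝ) ≤ 256 * ((kk N : ℝ) * (LB N) + kk N) := by
    have hKBl2 : (kk N:ℝ) * Real.log N ≤ (kk N:ℝ) * (LB N) * Real.log 2 := by
      have := mul_le_mul_of_nonneg_left hLB hK0
      nlinarith
    have hLsmall : Real.log N ≤ (N:ℝ) / 2^69 := by nlinarith
    nlinarith
  exact_mod_cast goalR

-- derived nat facts
lemma M_HH_le (hN : 2^150 ≤ N) : HH N ≤ N := by
  have h := key_real hN
  have h2 : 3 * ss N ≤ LB N + 3 := by
    have := Nat.div_mul_le_self (LB N) 3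
    simp only [ss]; omega
  have h3 : 3 * HH N ≤ 24 * (kk N * ss N) + 3 * kk N := by
    simp only [HH, ZT]; ring_nf; omega
  have h4 : 3 * (kk N * ss N) ≤ kk N * LB N + 3 * kk N := by
    calc 3 * (kk N * ss N) = kk N * (3 * ss N) := by ring
      _ ≤ kk N * (LB N + 3) := Nat.mul_le_mul_left _ h2
      _ = kk N * LB N + 3 * kk N := by ring
  nlinarith

lemma M_numkey (hN : 2^150 ≤ N) :
    LB N * (kk N + 1) + LB N + 8 * DD N + 2 * kk N + 3 ≤ num N := by
  have h := key_real hN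
  have h2 : 3 * ss N ≤ LB N + 3 := by
    have := Nat.div_mul_le_self (LB N) 3
    simp only [ss]; omega
  have h4 : 3 * (kk N * ss N) ≤ kk N * LB N + 3 * kk N := by
    calc 3 * (kk N * ss N) = kk N * (3 * ss N) := by ring
      _ ≤ kk N * (LB N + 3) := Nat.mul_le_mul_left _ h2
      _ = kk N * LB N + 3 * kk N := by ring
  rw [num, Nat.le_div_iff_mul_le (by norm_num : 0 < 2)]
  -- suffices: (LHS)*2 + HH ≤ N
  have hHH : 3 * HH N ≤ 8 * (kk N * LB N) + 27 * kk N := by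
    simp only [HH, ZT]; nlinarith
  have hDD : 3 * DD N ≤ 3 * kk N + kk N * LB N + 3 * kk N := by
    simp only [DD]; omega
  -- 3*2*LHS + 3*HH ≤ 3N
  have target3 : 6 * (LB N * (kk N + 1) + LB N + 8 * DD N + 2 * kk N + 3) + 3 * HH N ≤ 3 * N := by
    nlinarith
  omega

lemma M_3N (hN : 2^150 ≤ N) : 3 * N ≤ 256 * DD N := by
  have h := key_real2 hN
  have h2 : LB N ≤ 3 * (ss N) := by simp only [ss]; omega
  have h3 : kk N * LB N + kk N ≤ 3 * DD N := by
    simp only [DD]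
    calc kk N * LB N + kk N ≤ kk N * (3 * ss N) + 3 * kk N := by
          have := Nat.mul_le_mul_left (kk N) h2; omega
      _ = 3 * (kk N + kk N * ss N) := by ring
  omega

lemma M_2DD (hN : 2^150 ≤ N) : 2 * DD N ≤ N := by
  have h := key_real hN
  have h2 : 3 * ss N ≤ LB N + 3 := by
    have := Nat.div_mul_le_self (LB N) 3
    simp only [ss]; omega
  have h4 : 3 * (kk N * ss N) ≤ kk N * LB N + 3 * kk N := by
    calc 3 * (kk N * ss N) = kk N * (3 * ss N) := by ring
      _ ≤ kk N * (LB N + 3) := Nat.mul_le_mul_left _ h2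
      _ = kk N * LB N + 3 * kk N := by ring
  have : 3 * DD N ≤ 3 * kk N + kk N * LB N + 3 * kk N := by simp only [DD]; omega
  nlinarith

lemma M_8ss (hN : 2^150 ≤ N) : N ≤ 8^(ss N) := by
  have h1 := LB_pow hN
  calc N ≤ 2^(LB N) := h1
    _ ≤ 2^(3 * ss N) := Nat.pow_le_pow_right (by norm_num) (by simp only [ss]; omega)
    _ = 8^(ss N) := by rw [show (8:ℕ) = 2^3 by norm_num, ← pow_mul]

lemma M_DD_pos (hN : 2^150 ≤ N) : 1 ≤ DD N := by
  have := kk_pos hN; simp only [DD]; nlinarith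

end Arith

-- ##### choose bounds #####
section Choose

lemma succ_pow_le_three_mul (d : ℕ) (hd : 1 ≤ d) : (d+1)^d ≤ 3 * d^d := by
  have hd0 : (0:ℝ) < (d:ℝ) := by exact_mod_cast hd
  have key : ((d:ℝ)+1)^d ≤ 3 * (d:ℝ)^d := by
    have h1 : (d:ℝ) + 1 = (d:ℝ) * (1 + 1/d) := by field_simp
    have h2 : (1:ℝ) + 1/d ≤ Real.exp (1/d) := by
      have := Real.add_one_le_exp (1/(d:ℝ)); linarith
    have h3 : ((1:ℝ) + 1/d)^d ≤ (Real.exp (1/d))^d := by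
      apply pow_le_pow_left₀ (by positivity) h2
    have h4 : (Real.exp (1/(d:ℝ)))^d = Real.exp 1 := by
      rw [← Real.exp_nat_mul]
      congr 1; field_simp
    have h5 : Real.exp 1 ≤ 3 := by
      have := Real.exp_one_lt_d9; linarith
    calc ((d:ℝ)+1)^d = (d:ℝ)^d * ((1:ℝ)+1/d)^d := by rw [h1, mul_pow]
      _ ≤ (d:ℝ)^d * 3 := by
          apply mul_le_mul_of_nonneg_left _ (by positivity)
          rw [h4] at h3; linarith
      _ = 3 * (d:ℝ)^d := by ring
  exact_mod_cast key

lemma pow_self_le (d : ℕ) : d^d ≤ 3^d * d.factorial := by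
  induction d with
  | zero => simp
  | succ d ih =>
    rcases Nat.eq_zero_or_pos d with h | h
    · subst h; norm_num
    · have h1 : (d+1)^(d+1) = (d+1) * (d+1)^d := by ring
      have h2 := succ_pow_le_three_mul d h
      calc (d+1)^(d+1) = (d+1) * (d+1)^d := h1
        _ ≤ (d+1) * (3 * d^d) := Nat.mul_le_mul_left _ h2
        _ ≤ (d+1) * (3 * (3^d * d.factorial)) := by
            apply Nat.mul_le_mul_left
            exact Nat.mul_le_mul_left _ ih
        _ = 3^(d+1) * (d+1).factorial := by
            rw [Nat.factorial_succ]; ring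

lemma choose_le_256_pow {n d : ℕ} (h3 : 3 * n ≤ 256 * d) (hd : 1 ≤ d) :
    n.choose d ≤ 2^(8*d) := by
  have h1 : n.choose d * d.factorial ≤ n^d := by
    calc n.choose d * d.factorial ≤ n.descFactorial d := by
          rw [Nat.descFactorial_eq_factorial_mul_choose]; ring_nf; omega
      _ ≤ n^d := Nat.descFactorial_le_pow n d
  have h2 : n.choose d * d^d ≤ (3*n)^d := by
    calc n.choose d * d^d ≤ n.choose d * (3^d * d.factorial) :=
          Nat.mul_le_mul_left _ (pow_self_le d)
      _ = 3^d * (n.choose d * d.factorial) := by ring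
      _ ≤ 3^d * n^d := Nat.mul_le_mul_left _ h1
      _ = (3*n)^d := by rw [mul_pow]
  have h4 : n.choose d * d^d ≤ (256*d)^d := by
    calc n.choose d * d^d ≤ (3*n)^d := h2
      _ ≤ (256*d)^d := Nat.pow_le_pow_left h3 d
  have h5 : (256*d)^d = 2^(8*d) * d^d := by
    rw [mul_pow, show (256:ℕ) = 2^8 by norm_num, ← pow_mul]
  rw [h5] at h4
  have hdd : 0 < d^d := Nat.pow_pos (by omega)
  exact Nat.le_of_mul_le_mul_right h4 hdd

lemma choose_mono_left {n i j : ℕ} (hij : i ≤ j) (hj : 2*j ≤ n) :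
    n.choose i ≤ n.choose j := by
  induction j with
  | zero =>
    have : i = 0 := by omega
    subst this; rfl
  | succ j ih =>
    rcases Nat.lt_or_ge i (j+1) with h | h
    · have h1 : n.choose i ≤ n.choose j := ih (by omega) (by omega)
      have h2 : n.choose j ≤ n.choose (j+1) := by
        have he := Nat.choose_succ_right_eq n j
        have hle : n.choose j * (j+1) ≤ n.choose (j+1) * (j+1) := by
          rw [he]
          exact Nat.mul_le_mul_left _ (by omega)
        exact Nat.le_of_mul_le_mul_right hle (by omega)
      omega
    · have : i = j+1 := by omega
      subst this; rfl

end Choose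

-- ##### pairs and Big sets #####
section Pairs
variable (N : ℕ) [NeZero N]

def emb (x : ℕ) : Fin N := ⟨x % N, Nat.mod_lt _ (Nat.pos_of_ne_zero (NeZero.ne N))⟩

lemma emb_val {x : ℕ} (h : x < N) : (emb N x).val = x := Nat.mod_eq_of_lt h

noncomputable def pLow (i : ℕ) : Fin N := emb N (HH N + 2*i)
noncomputable def pHigh (i : ℕ) : Fin N := emb N (HH N + 2*i + 1)

noncomputable def UY (Y : Finset (Fin N)) : Finset ℕ :=
  (Finset.range (num N)).filter (fun i => pLow N i ∉ Y ∧ pHigh N i ∉ Y)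

noncomputable def pick (σ : Finset ℕ) (i : ℕ) : Fin N :=
  if i ∈ σ then pHigh N i else pLow N i

noncomputable def BigOf (Y : Finset (Fin N)) (σ : Finset ℕ) : Finset (Fin N) :=
  (UY N Y).image (pick N σ)

variable {N}

lemma pair_lt (hN : 2^150 ≤ N) {i : ℕ} (hi : i < num N) : HH N + 2*i + 1 < N := by
  have h1 := M_HH_le hN
  have h2 : 2 * num N ≤ N - HH N := by
    simp only [num]; omega
  -- need strictness: i < num so 2*i+1 < 2*num; also num > 0 so N-HH > 0
  omega

lemma pLow_val (hN : 2^150 ≤ N) {i : ℕ} (hi : i < num N) : (pLow N i).val = HH N + 2*i :=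
  emb_val N (by have := pair_lt hN hi; omega)

lemma pHigh_val (hN : 2^150 ≤ N) {i : ℕ} (hi : i < num N) : (pHigh N i).val = HH N + 2*i + 1 :=
  emb_val N (pair_lt hN hi)

lemma mem_UY {Y : Finset (Fin N)} {i : ℕ} :
    i ∈ UY N Y ↔ i < num N ∧ pLow N i ∉ Y ∧ pHigh N i ∉ Y := by
  simp [UY, Finset.mem_filter, Finset.mem_range]

lemma pick_cases (σ : Finset ℕ) (i : ℕ) :
    (i ∈ σ ∧ pick N σ i = pHigh N i) ∨ (i ∉ σ ∧ pick N σ i = pLow N i) := by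
  by_cases h : i ∈ σ <;> simp [pick, h]

lemma pick_val_bounds (hN : 2^150 ≤ N) {σ : Finset ℕ} {i : ℕ} (hi : i < num N) :
    HH N + 2*i ≤ (pick N σ i).val ∧ (pick N σ i).val ≤ HH N + 2*i + 1 := by
  rcases pick_cases (N := N) σ i with ⟨_, h⟩ | ⟨_, h⟩ <;>
    rw [h] <;> simp [pLow_val hN hi, pHigh_val hN hi]

lemma pick_inj (hN : 2^150 ≤ N) {σ σ' : Finset ℕ} {i j : ℕ}
    (hi : i < num N) (hj : j < num N) (h : pick N σ i = pick N σ' j) : i = j := by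
  have h1 := pick_val_bounds hN (σ := σ) hi
  have h2 := pick_val_bounds hN (σ := σ') hj
  have := congrArg Fin.val h
  omega

lemma mem_BigOf {Y : Finset (Fin N)} {σ : Finset ℕ} {x : Fin N} :
    x ∈ BigOf N Y σ ↔ ∃ i ∈ UY N Y, pick N σ i = x := by
  simp [BigOf, Finset.mem_image]

lemma pHigh_mem_BigOf (hN : 2^150 ≤ N) {Y : Finset (Fin N)} {σ : Finset ℕ} {i : ℕ}
    (hi : i < num N) : pHigh N i ∈ BigOf N Y σ ↔ i ∈ UY N Y ∧ i ∈ σ := by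
  constructor
  · rw [mem_BigOf]
    rintro ⟨j, hj, hpick⟩
    have hjn : j < num N := (mem_UY.mp hj).1
    have hb := pick_val_bounds hN (σ := σ) hjn
    have hv := congrArg Fin.val hpick
    rw [pHigh_val hN hi] at hv
    have hij : j = i := by omega
    subst hij
    refine ⟨hj, ?_⟩
    rcases pick_cases (N := N) σ j with ⟨hm, _⟩ | ⟨hm, h⟩
    · exact hm
    · exfalso; rw [h] at hpick
      have := congrArg Fin.val hpick
      rw [pLow_val hN hjn, pHigh_val hN hjn] at this
      omega
  · rintro ⟨h1, h2⟩
    rw [mem_BigOf]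
    exact ⟨i, h1, by simp [pick, h2]⟩

lemma pLow_mem_BigOf (hN : 2^150 ≤ N) {Y : Finset (Fin N)} {σ : Finset ℕ} {i : ℕ}
    (hi : i < num N) : pLow N i ∈ BigOf N Y σ ↔ i ∈ UY N Y ∧ i ∉ σ := by
  constructor
  · rw [mem_BigOf]
    rintro ⟨j, hj, hpick⟩
    have hjn : j < num N := (mem_UY.mp hj).1
    have hb := pick_val_bounds hN (σ := σ) hjn
    have hv := congrArg Fin.val hpick
    rw [pLow_val hN hi] at hv
    have hij : j = i := by omega
    subst hij
    refine ⟨hj, ?_⟩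
    rcases pick_cases (N := N) σ j with ⟨hm, h⟩ | ⟨hm, _⟩
    · exfalso; rw [h] at hpick
      have := congrArg Fin.val hpick
      rw [pLow_val hN hjn, pHigh_val hN hjn] at this
      omega
    · exact hm
  · rintro ⟨h1, h2⟩
    rw [mem_BigOf]
    exact ⟨i, h1, by simp [pick, h2]⟩

lemma BigOf_not_mem_Y {Y : Finset (Fin N)} {σ : Finset ℕ} {x : Fin N}
    (hx : x ∈ BigOf N Y σ) : x ∉ Y := by
  rw [mem_BigOf] at hx
  obtain ⟨i, hi, hpick⟩ := hx
  rw [mem_UY] at hi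
  rcases pick_cases (N := N) σ i with ⟨_, h⟩ | ⟨_, h⟩ <;> rw [h] at hpick <;>
    [exact hpick ▸ hi.2.2; exact hpick ▸ hi.2.1]

lemma BigOf_val_ge (hN : 2^150 ≤ N) {Y : Finset (Fin N)} {σ : Finset ℕ} {x : Fin N}
    (hx : x ∈ BigOf N Y σ) : HH N ≤ x.val := by
  rw [mem_BigOf] at hx
  obtain ⟨i, hi, hpick⟩ := hx
  have hin : i < num N := (mem_UY.mp hi).1
  have := pick_val_bounds hN (σ := σ) hin
  rw [hpick] at this
  omega

end Pairs

section Greedy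
variable {N : ℕ} [NeZero N]

lemma card_hit_le (hN : 2^150 ≤ N) (Y' : Finset (Fin N)) (s : Finset ℕ)
    (hs : ∀ i ∈ s, i < num N ∧ (pLow N i ∈ Y' ∨ pHigh N i ∈ Y')) :
    s.card ≤ Y'.card := by
  apply Finset.card_le_card_of_injOn
    (fun i => if pLow N i ∈ Y' then pLow N i else pHigh N i)
  · intro i hi
    rcases (hs i hi).2 with h | h
    · simp [h]
    · by_cases h2 : pLow N i ∈ Y' <;> simp [h2, h]
  · intro i hi j hj hij
    simp only at hij
    have hi' := (hs i (by exact hi)).1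
    have hj' := (hs j (by exact hj)).1
    have hvi : (if pLow N i ∈ Y' then pLow N i else pHigh N i).val = HH N + 2*i ∨
        (if pLow N i ∈ Y' then pLow N i else pHigh N i).val = HH N + 2*i + 1 := by
      by_cases h2 : pLow N i ∈ Y' <;> simp [h2, pLow_val hN hi', pHigh_val hN hi']
    have hvj : (if pLow N j ∈ Y' then pLow N j else pHigh N j).val = HH N + 2*j ∨
        (if pLow N j ∈ Y' then pLow N j else pHigh N j).val = HH N + 2*j + 1 := by
      by_cases h2 : pLow N j ∈ Y' <;> simp [h2, pLow_val hN hj', pHigh_val hN hj']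
    have := congrArg Fin.val hij
    omega

lemma UY_card_ge (hN : 2^150 ≤ N) {Y : Finset (Fin N)} (hY : Y.card = kk N) :
    num N - kk N ≤ (UY N Y).card := by
  classical
  have hbad : ((Finset.range (num N)).filter
      (fun i => ¬(pLow N i ∉ Y ∧ pHigh N i ∉ Y))).card ≤ kk N := by
    rw [← hY]
    apply card_hit_le hN Y
    intro i hi
    simp only [Finset.mem_filter, Finset.mem_range] at hi
    constructor
    · exact hi.1
    · by_contra h
      push_neg at h
      exact hi.2 ⟨h.1, h.2⟩
  have hsub : Finset.range (num N) ⊆ UY N Y ∪ ((Finset.range (num N)).filter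
      (fun i => ¬(pLow N i ∉ Y ∧ pHigh N i ∉ Y))) := by
    intro i hi
    simp only [Finset.mem_union, mem_UY, Finset.mem_filter, Finset.mem_range] at *
    by_cases h : pLow N i ∉ Y ∧ pHigh N i ∉ Y
    · exact Or.inl ⟨hi, h⟩
    · exact Or.inr ⟨hi, h⟩
  have := (Finset.card_le_card hsub).trans (Finset.card_union_le _ _)
  rw [Finset.card_range] at this
  omega

lemma W_card_le (hN : 2^150 ≤ N) {Y Y' : Finset (Fin N)} (hY' : Y'.card = kk N) :
    (UY N Y \ UY N Y').card ≤ kk N := by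
  rw [← hY']
  apply card_hit_le hN Y'
  intro i hi
  simp only [Finset.mem_sdiff, mem_UY] at hi
  obtain ⟨⟨h1, _, _⟩, h4⟩ := hi
  refine ⟨h1, ?_⟩
  by_contra h
  push_neg at h
  exact h4 ⟨h1, h.1, h.2⟩

-- the collection of small sets
noncomputable def OmD (N : ℕ) : Finset (Finset (Fin N)) :=
  (Finset.range (DD N + 1)).biUnion (fun j => Finset.powersetCard j Finset.univ)

lemma mem_OmD {W : Finset (Fin N)} : W ∈ OmD N ↔ W.card ≤ DD N := by
  simp only [OmD, Finset.mem_biUnion, Finset.mem_range, Finset.mem_powersetCard]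
  constructor
  · rintro ⟨j, hj, _, rfl⟩; omega
  · intro h; exact ⟨W.card, by omega, Finset.subset_univ _, rfl⟩

lemma OmD_card (hN : 2^150 ≤ N) : (OmD N).card ≤ (DD N + 1) * (N.choose (DD N)) := by
  calc (OmD N).card ≤ ∑ j ∈ Finset.range (DD N + 1), (Finset.powersetCard j (Finset.univ : Finset (Fin N))).card :=
        Finset.card_biUnion_le
    _ ≤ ∑ _j ∈ Finset.range (DD N + 1), N.choose (DD N) := by
        apply Finset.sum_le_sum
        intro j hj
        rw [Finset.card_powersetCard, Finset.card_univ, Fintype.card_fin]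
        exact choose_mono_left (by simp at hj; omega) (M_2DD hN)
    _ = (DD N + 1) * (N.choose (DD N)) := by
        rw [Finset.sum_const, Finset.card_range]; ring

-- injectivity 1 : recover σ from (BigOf Y σ) \ B
lemma rec1_aux (hN : 2^150 ≤ N) {Y Y' : Finset (Fin N)} {σ' : Finset ℕ}
    {σa σb : Finset ℕ} (ha : σa ⊆ UY N Y) (hb : σb ⊆ UY N Y)
    (hdiff : BigOf N Y σa \ BigOf N Y' σ' = BigOf N Y σb \ BigOf N Y' σ')
    {i : ℕ} (hia : i ∈ σa) : i ∈ σb := by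
  have hiU : i ∈ UY N Y := ha hia
  have hin : i < num N := (mem_UY.mp hiU).1
  by_contra hib
  have hH1 : pHigh N i ∈ BigOf N Y σa := (pHigh_mem_BigOf hN hin).mpr ⟨hiU, hia⟩
  have hL2 : pLow N i ∈ BigOf N Y σb := (pLow_mem_BigOf hN hin).mpr ⟨hiU, hib⟩
  have hH2 : pHigh N i ∉ BigOf N Y σb := fun h => hib ((pHigh_mem_BigOf hN hin).mp h).2
  have hL1 : pLow N i ∉ BigOf N Y σa := fun h => ((pLow_mem_BigOf hN hin).mp h).2 hia
  by_cases hBH : pHigh N i ∈ BigOf N Y' σ'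
  · -- then pLow i ∉ B, so pLow i ∈ Bigb \ B = Biga \ B ⊆ Biga, contradiction
    have hBL : pLow N i ∉ BigOf N Y' σ' := by
      intro h
      exact ((pLow_mem_BigOf hN hin).mp h).2 ((pHigh_mem_BigOf hN hin).mp hBH).2
    have : pLow N i ∈ BigOf N Y σb \ BigOf N Y' σ' := Finset.mem_sdiff.mpr ⟨hL2, hBL⟩
    rw [← hdiff] at this
    exact hL1 (Finset.mem_sdiff.mp this).1
  · have : pHigh N i ∈ BigOf N Y σa \ BigOf N Y' σ' := Finset.mem_sdiff.mpr ⟨hH1, hBH⟩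
    rw [hdiff] at this
    exact hH2 (Finset.mem_sdiff.mp this).1

lemma rec1 (hN : 2^150 ≤ N) {Y Y' : Finset (Fin N)} {σ' : Finset ℕ}
    {σa σb : Finset ℕ} (ha : σa ⊆ UY N Y) (hb : σb ⊆ UY N Y)
    (hdiff : BigOf N Y σa \ BigOf N Y' σ' = BigOf N Y σb \ BigOf N Y' σ') : σa = σb := by
  ext i
  exact ⟨fun h => rec1_aux hN ha hb hdiff h, fun h => rec1_aux hN hb ha hdiff.symm h⟩

-- injectivity 2 : recover σ from (B \ BigOf Y σ, σ ∩ (UY Y \ UY Y'))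
lemma rec2_aux (hN : 2^150 ≤ N) {Y Y' : Finset (Fin N)} {σ' : Finset ℕ} (hσ' : σ' ⊆ UY N Y')
    {σa σb : Finset ℕ} (ha : σa ⊆ UY N Y) (hb : σb ⊆ UY N Y)
    (hdiff : BigOf N Y' σ' \ BigOf N Y σa = BigOf N Y' σ' \ BigOf N Y σb)
    (hw : σa ∩ (UY N Y \ UY N Y') = σb ∩ (UY N Y \ UY N Y'))
    {i : ℕ} (hia : i ∈ σa) : i ∈ σb := by
  have hiU : i ∈ UY N Y := ha hia
  have hin : i < num N := (mem_UY.mp hiU).1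
  by_cases hiY' : i ∈ UY N Y'
  · -- common pair
    have hbi : pick N σ' i ∈ BigOf N Y' σ' := mem_BigOf.mpr ⟨i, hiY', rfl⟩
    have key : ∀ σc : Finset ℕ, σc ⊆ UY N Y →
        (pick N σ' i ∈ BigOf N Y σc ↔ (i ∈ σ' ↔ i ∈ σc)) := by
      intro σc hc
      constructor
      · intro h
        obtain ⟨j, hj, hpick⟩ := mem_BigOf.mp h
        have hjn : j < num N := (mem_UY.mp hj).1
        have hij : j = i := pick_inj hN hjn hin hpick
        subst hij
        rcases pick_cases (N := N) σ' j with ⟨h1, e1⟩ | ⟨h1, e1⟩ <;>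
          rcases pick_cases (N := N) σc j with ⟨h2, e2⟩ | ⟨h2, e2⟩ <;>
          simp only [e1, e2] at hpick <;> first
          | (exact iff_of_true h1 h2)
          | (exact iff_of_false h1 h2)
          | (exfalso
             have := congrArg Fin.val hpick
             rw [pLow_val hN hjn, pHigh_val hN hjn] at this
             omega)
      · intro hiff
        apply mem_BigOf.mpr ⟨i, hiU, ?_⟩
        rcases pick_cases (N := N) σ' i with ⟨h1, e1⟩ | ⟨h1, e1⟩ <;>
          rcases pick_cases (N := N) σc i with ⟨h2, e2⟩ | ⟨h2, e2⟩ <;>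
          rw [e1, e2] <;> first
          | rfl
          | (exact absurd (hiff.mp h1) h2)
          | (exact absurd (hiff.mpr h2) h1)
    by_cases hiσ' : i ∈ σ'
    · have h1 : pick N σ' i ∈ BigOf N Y σa := (key σa ha).mpr (iff_of_true hiσ' hia)
      have h2 : pick N σ' i ∉ BigOf N Y' σ' \ BigOf N Y σa := by
        simp [Finset.mem_sdiff, h1]
      rw [hdiff] at h2
      have h3 : pick N σ' i ∈ BigOf N Y σb := by
        by_contra h
        exact h2 (Finset.mem_sdiff.mpr ⟨hbi, h⟩)
      exact ((key σb hb).mp h3).mp hiσ'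
    · have h1 : pick N σ' i ∉ BigOf N Y σa := by
        intro h
        exact hiσ' (((key σa ha).mp h).mpr hia)
      have h2 : pick N σ' i ∈ BigOf N Y' σ' \ BigOf N Y σa := Finset.mem_sdiff.mpr ⟨hbi, h1⟩
      rw [hdiff] at h2
      have h3 : pick N σ' i ∉ BigOf N Y σb := (Finset.mem_sdiff.mp h2).2
      by_contra hib
      exact h3 ((key σb hb).mpr (iff_of_false hiσ' hib))
  · -- i in W
    have hiw : i ∈ σa ∩ (UY N Y \ UY N Y') := by
      simp [Finset.mem_inter, Finset.mem_sdiff, hia, hiU, hiY']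
    rw [hw] at hiw
    exact (Finset.mem_inter.mp hiw).1

lemma rec2 (hN : 2^150 ≤ N) {Y Y' : Finset (Fin N)} {σ' : Finset ℕ} (hσ' : σ' ⊆ UY N Y')
    {σa σb : Finset ℕ} (ha : σa ⊆ UY N Y) (hb : σb ⊆ UY N Y)
    (hdiff : BigOf N Y' σ' \ BigOf N Y σa = BigOf N Y' σ' \ BigOf N Y σb)
    (hw : σa ∩ (UY N Y \ UY N Y') = σb ∩ (UY N Y \ UY N Y')) : σa = σb := by
  ext i
  exact ⟨fun h => rec2_aux hN hσ' ha hb hdiff hw h,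
         fun h => rec2_aux hN hσ' hb ha hdiff.symm hw.symm h⟩

-- cardinality of the bad sets in one step
lemma bad1_card (hN : 2^150 ≤ N) (Y : Finset (Fin N)) (B : Finset (Fin N))
    (hB : ∃ Y' σ', σ' ⊆ UY N Y' ∧ B = BigOf N Y' σ') :
    (((UY N Y).powerset).filter (fun σ => ((BigOf N Y σ) \ B).card ≤ DD N)).card
      ≤ (OmD N).card := by
  obtain ⟨Y', σ', hσ', rfl⟩ := hB
  apply Finset.card_le_card_of_injOn (fun σ => BigOf N Y σ \ BigOf N Y' σ')
  · intro σ hσ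
    simp only [Finset.mem_coe, Finset.mem_filter] at hσ
    exact mem_OmD.mpr hσ.2
  · intro σa hσa σb hσb h
    simp only [Finset.mem_coe, Finset.mem_filter, Finset.mem_powerset] at hσa hσb
    exact rec1 hN hσa.1 hσb.1 h

lemma bad2_card (hN : 2^150 ≤ N) (Y : Finset (Fin N)) (B : Finset (Fin N))
    (hB : ∃ Y' σ', σ' ⊆ UY N Y' ∧ Y'.card = kk N ∧ B = BigOf N Y' σ') :
    (((UY N Y).powerset).filter (fun σ => (B \ (BigOf N Y σ)).card ≤ DD N)).card
      ≤ (OmD N).card * 2^(kk N) := by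
  obtain ⟨Y', σ', hσ', hY', rfl⟩ := hB
  have hWcard := W_card_le hN (Y := Y) hY'
  calc _ ≤ ((OmD N) ×ˢ (UY N Y \ UY N Y').powerset).card := by
        apply Finset.card_le_card_of_injOn
          (fun σ => (BigOf N Y' σ' \ BigOf N Y σ, σ ∩ (UY N Y \ UY N Y')))
        · intro σ hσ
          simp only [Finset.mem_coe, Finset.mem_filter, Finset.mem_powerset] at hσ
          refine Finset.mem_product.mpr ⟨mem_OmD.mpr hσ.2, ?_⟩
          exact Finset.mem_powerset.mpr Finset.inter_subset_right
        · intro σa hσa σb hσb h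
          simp only [Finset.mem_coe, Finset.mem_filter, Finset.mem_powerset] at hσa hσb
          have h1 := congrArg Prod.fst h
          have h2 := congrArg Prod.snd h
          simp only at h1 h2
          exact rec2 hN hσ' hσa.1 hσb.1 h1 h2
    _ ≤ (OmD N).card * 2^(kk N) := by
        rw [Finset.card_product, Finset.card_powerset]
        exact Nat.mul_le_mul_left _ (Nat.pow_le_pow_right (by norm_num) hWcard)

-- the master counting inequality
lemma master_count (hN : 2^150 ≤ N) :
    N^(kk N + 1) * ((DD N + 1) * (N.choose (DD N)) * 2^(kk N + 1)) < 2^(num N - kk N) := by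
  have h1 : N^(kk N + 1) ≤ 2^(LB N * (kk N + 1)) := by
    calc N^(kk N + 1) ≤ (2^(LB N))^(kk N + 1) := Nat.pow_le_pow_left (LB_pow hN) _
      _ = 2^(LB N * (kk N + 1)) := by rw [← pow_mul]
  have h2 : DD N + 1 ≤ 2^(LB N + 1) := by
    have hDN : DD N ≤ N := by have := M_2DD hN; omega
    have := LB_pow hN
    calc DD N + 1 ≤ N + 1 := by omega
      _ ≤ 2^(LB N) + 2^(LB N) := by have : 1 ≤ 2^(LB N) := Nat.one_le_two_pow; omega
      _ = 2^(LB N + 1) := by ring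
  have h3 : N.choose (DD N) ≤ 2^(8 * DD N) :=
    choose_le_256_pow (M_3N hN) (M_DD_pos hN)
  have hE : LB N * (kk N + 1) + (LB N + 1) + 8 * DD N + (kk N + 1) < num N - kk N := by
    have := M_numkey hN
    have hk := kk_pos hN
    omega
  calc N^(kk N + 1) * ((DD N + 1) * (N.choose (DD N)) * 2^(kk N + 1))
      ≤ 2^(LB N * (kk N + 1)) * (2^(LB N + 1) * 2^(8 * DD N) * 2^(kk N + 1)) := by
        apply Nat.mul_le_mul h1
        apply Nat.mul_le_mul _ (le_refl _)
        exact Nat.mul_le_mul h2 h3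
    _ = 2^(LB N * (kk N + 1) + (LB N + 1) + 8 * DD N + (kk N + 1)) := by
        rw [← pow_add, ← pow_add, ← pow_add]
        ring_nf
    _ < 2^(num N - kk N) := Nat.pow_lt_pow_right (by norm_num) hE

lemma greedy_step (hN : 2^150 ≤ N) (Y : Finset (Fin N)) (hY : Y.card = kk N)
    (G : Finset (Finset (Fin N))) (hGcard : G.card ≤ N^(kk N + 1))
    (hG : ∀ B ∈ G, ∃ Y' σ', Y'.card = kk N ∧ σ' ⊆ UY N Y' ∧ B = BigOf N Y' σ') :
    ∃ σ ⊆ UY N Y, ∀ B ∈ G,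
      DD N < ((BigOf N Y σ) \ B).card ∧ DD N < (B \ (BigOf N Y σ)).card := by
  classical
  set cand := (UY N Y).powerset with hcand
  set bad := cand.filter
    (fun σ => ∃ B ∈ G, ((BigOf N Y σ) \ B).card ≤ DD N ∨ (B \ (BigOf N Y σ)).card ≤ DD N)
    with hbad
  have hbadsub : bad ⊆ G.biUnion (fun B =>
      (cand.filter (fun σ => ((BigOf N Y σ) \ B).card ≤ DD N)) ∪
      (cand.filter (fun σ => (B \ (BigOf N Y σ)).card ≤ DD N))) := by
    intro σ hσ
    simp only [hbad, Finset.mem_filter] at hσ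
    obtain ⟨hc, B, hBG, hcase⟩ := hσ
    apply Finset.mem_biUnion.mpr ⟨B, hBG, ?_⟩
    rcases hcase with h | h
    · exact Finset.mem_union_left _ (Finset.mem_filter.mpr ⟨hc, h⟩)
    · exact Finset.mem_union_right _ (Finset.mem_filter.mpr ⟨hc, h⟩)
  have hbadcard : bad.card ≤ G.card * ((OmD N).card * (2^(kk N) + 1)) := by
    calc bad.card ≤ ∑ B ∈ G,
        ((cand.filter (fun σ => ((BigOf N Y σ) \ B).card ≤ DD N)) ∪
         (cand.filter (fun σ => (B \ (BigOf N Y σ)).card ≤ DD N))).card :=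
          le_trans (Finset.card_le_card hbadsub) Finset.card_biUnion_le
      _ ≤ ∑ _B ∈ G, (OmD N).card * (2^(kk N) + 1) := by
          apply Finset.sum_le_sum
          intro B hB
          obtain ⟨Y', σ', hY', hσ', rfl⟩ := hG B hB
          calc _ ≤ (cand.filter (fun σ => ((BigOf N Y σ) \ _).card ≤ DD N)).card +
                (cand.filter (fun σ => ((_ : Finset (Fin N)) \ (BigOf N Y σ)).card ≤ DD N)).card :=
                Finset.card_union_le _ _
            _ ≤ (OmD N).card + (OmD N).card * 2^(kk N) := by
                apply Nat.add_le_add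
                · exact bad1_card hN Y _ ⟨Y', σ', hσ', rfl⟩
                · exact bad2_card hN Y _ ⟨Y', σ', hσ', hY', rfl⟩
            _ = (OmD N).card * (2^(kk N) + 1) := by ring
      _ = G.card * ((OmD N).card * (2^(kk N) + 1)) := by
          rw [Finset.sum_const]; ring
  have hlt : bad.card < cand.card := by
    have hc : cand.card = 2^((UY N Y).card) := Finset.card_powerset _
    have hUY := UY_card_ge hN hY
    have h1 : bad.card ≤ N^(kk N + 1) * ((DD N + 1) * (N.choose (DD N)) * 2^(kk N + 1)) := by
      calc bad.card ≤ G.card * ((OmD N).card * (2^(kk N) + 1)) := hbadcard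
        _ ≤ N^(kk N + 1) * (((DD N + 1) * (N.choose (DD N))) * 2^(kk N + 1)) := by
            apply Nat.mul_le_mul hGcard
            apply Nat.mul_le_mul (OmD_card hN)
            have : 2^(kk N) + 1 ≤ 2^(kk N + 1) := by
              have : 1 ≤ 2^(kk N) := Nat.one_le_two_pow
              ring_nf; omega
            exact this
    calc bad.card ≤ _ := h1
      _ < 2^(num N - kk N) := master_count hN
      _ ≤ 2^((UY N Y).card) := Nat.pow_le_pow_right (by norm_num) hUY
      _ = cand.card := hc.symm
  have hne : (cand \ bad).Nonempty := by
    apply Finset.card_pos.mp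
    have hsub : bad ⊆ cand := Finset.filter_subset _ _
    have := Finset.card_sdiff_of_subset hsub
    omega
  obtain ⟨σ, hσ⟩ := hne
  rw [Finset.mem_sdiff] at hσ
  refine ⟨σ, Finset.mem_powerset.mp hσ.1, ?_⟩
  intro B hB
  have : ¬ (∃ B ∈ G, ((BigOf N Y σ) \ B).card ≤ DD N ∨ (B \ (BigOf N Y σ)).card ≤ DD N) := by
    intro h
    exact hσ.2 (Finset.mem_filter.mpr ⟨hσ.1, h⟩)
  push_neg at this
  have h2 := this B hB
  omega

lemma greedy_list (hN : 2^150 ≤ N) :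
    ∀ (l : List (Finset (Fin N) × Fin N)), l.length ≤ N^(kk N + 1) →
    (∀ p ∈ l, (p.1 : Finset (Fin N)).card = kk N) →
    ∃ g : Finset (Fin N) × Fin N → Finset ℕ,
      (∀ p, g p ⊆ UY N p.1) ∧
      ∀ p ∈ l, ∀ q ∈ l, p ≠ q →
        DD N < ((BigOf N p.1 (g p)) \ (BigOf N q.1 (g q))).card := by
  intro l
  induction l with
  | nil =>
    intro _ _
    exact ⟨fun _ => ∅, fun p => Finset.empty_subset _, by simp⟩
  | cons p l ih =>
    intro hlen hmem
    obtain ⟨g, hg1, hg2⟩ := ih (by simp at hlen ⊢; omega)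
      (fun q hq => hmem q (List.mem_cons_of_mem _ hq))
    classical
    set G := (l.map (fun q => BigOf N q.1 (g q))).toFinset with hGdef
    have hGcard : G.card ≤ N^(kk N + 1) := by
      calc G.card ≤ (l.map (fun q => BigOf N q.1 (g q))).length := List.toFinset_card_le _
        _ = l.length := List.length_map _
        _ ≤ N^(kk N + 1) := by simp at hlen; omega
    have hG : ∀ B ∈ G, ∃ Y' σ', Y'.card = kk N ∧ σ' ⊆ UY N Y' ∧ B = BigOf N Y' σ' := by
      intro B hB
      rw [hGdef, List.mem_toFinset, List.mem_map] at hB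
      obtain ⟨q, hq, rfl⟩ := hB
      exact ⟨q.1, g q, hmem q (List.mem_cons_of_mem _ hq), hg1 q, rfl⟩
    obtain ⟨σ, hσsub, hσ⟩ := greedy_step hN p.1 (hmem p List.mem_cons_self) G hGcard hG
    refine ⟨Function.update g p σ, ?_, ?_⟩
    · intro q
      by_cases h : q = p
      · subst h; simp [Function.update_self]; exact hσsub
      · simp [Function.update_of_ne h]; exact hg1 q
    · intro a ha b hb hab
      rw [List.mem_cons] at ha hb
      by_cases hap : a = p
      · subst hap
        have hbl : b ∈ l := by
          rcases hb with h | h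
          · exact absurd h (fun hh => hab hh.symm)
          · exact h
        rw [Function.update_self, Function.update_of_ne (by intro h; exact hab (h ▸ rfl))]
        exact (hσ (BigOf N b.1 (g b)) (by
          rw [hGdef, List.mem_toFinset, List.mem_map]; exact ⟨b, hbl, rfl⟩)).1
      · have hal : a ∈ l := by
          rcases ha with h | h
          · exact absurd h hap
          · exact h
        by_cases hbp : b = p
        · subst hbp
          rw [Function.update_self, Function.update_of_ne hap]
          exact (hσ (BigOf N a.1 (g a)) (by
            rw [hGdef, List.mem_toFinset, List.mem_map]; exact ⟨a, hal, rfl⟩)).2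
        · have hbl : b ∈ l := by
            rcases hb with h | h
            · exact absurd h hbp
            · exact h
          rw [Function.update_of_ne hap, Function.update_of_ne hbp]
          exact hg2 a hal b hbl hab

lemma exists_big (hN : 2^150 ≤ N) :
    ∃ f : Finset (Fin N) × Fin N → Finset (Fin N),
      (∀ p, ∀ x ∈ f p, x ∉ p.1 ∧ HH N ≤ x.val) ∧
      (∀ p q : Finset (Fin N) × Fin N, p.1.card = kk N → q.1.card = kk N → p ≠ q →
        DD N < ((f p) \ (f q)).card) := by
  classical
  set L := ((Finset.univ : Finset (Fin N)).powersetCard (kk N) ×ˢ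
    (Finset.univ : Finset (Fin N))).toList with hL
  have hLlen : L.length ≤ N^(kk N + 1) := by
    rw [hL, Finset.length_toList, Finset.card_product, Finset.card_powersetCard,
      Finset.card_univ, Fintype.card_fin]
    calc N.choose (kk N) * N ≤ N^(kk N) * N := by
          apply Nat.mul_le_mul_right
          calc N.choose (kk N) ≤ N.descFactorial (kk N) := Nat.choose_le_descFactorial N _
            _ ≤ N^(kk N) := Nat.descFactorial_le_pow N _
      _ = N^(kk N + 1) := by ring
  have hLmem : ∀ p ∈ L, (p.1 : Finset (Fin N)).card = kk N := by
    intro p hp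
    rw [hL, Finset.mem_toList, Finset.mem_product, Finset.mem_powersetCard] at hp
    exact hp.1.2
  obtain ⟨g, hg1, hg2⟩ := greedy_list hN L hLlen hLmem
  refine ⟨fun p => BigOf N p.1 (g p), ?_, ?_⟩
  · intro p x hx
    exact ⟨BigOf_not_mem_Y hx, BigOf_val_ge hN hx⟩
  · intro p q hp hq hpq
    apply hg2
    · rw [hL, Finset.mem_toList, Finset.mem_product, Finset.mem_powersetCard]
      exact ⟨⟨Finset.subset_univ _, hp⟩, Finset.mem_univ _⟩
    · rw [hL, Finset.mem_toList, Finset.mem_product, Finset.mem_powersetCard]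
      exact ⟨⟨Finset.subset_univ _, hq⟩, Finset.mem_univ _⟩
    · exact hpq

end Greedy

-- ##### digits #####
section Digits

def oct (b x : ℕ) : ℕ := x / 8^b % 8

lemma oct_lt (b x : ℕ) : oct b x < 8 := Nat.mod_lt _ (by norm_num)

lemma oct_inj : ∀ (s a b : ℕ), a < 8^s → b < 8^s → (∀ i < s, oct i a = oct i b) → a = b := by
  intro s
  induction s with
  | zero =>
    intro a b ha hb _
    simp at ha hb; omega
  | succ s ih =>
    intro a b ha hb h
    have h0 : a % 8 = b % 8 := by
      have := h 0 (by omega)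
      simpa [oct] using this
    have hdiv : a / 8 = b / 8 := by
      apply ih
      · have : a < 8^s * 8 := by rw [← pow_succ]; exact ha
        omega
      · have : b < 8^s * 8 := by rw [← pow_succ]; exact hb
        omega
      · intro i hi
        have := h (i+1) (by omega)
        simpa [oct, Nat.div_div_eq_div_mul, pow_succ, mul_comm] using this
    omega

lemma decomp {L a r a' r' : ℕ} (hr : r < L) (hr' : r' < L)
    (h : L*a + r = L*a' + r') : a = a' ∧ r = r' := by
  rcases Nat.lt_trichotomy a a' with h2 | h2 | h2
  · exfalso
    have e1 : L*(a+1) ≤ L*a' := Nat.mul_le_mul_left L h2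
    have e2 : L*(a+1) = L*a + L := by ring
    omega
  · subst h2; omega
  · exfalso
    have e1 : L*(a'+1) ≤ L*a := Nat.mul_le_mul_left L h2
    have e2 : L*(a'+1) = L*a' + L := by ring
    omega

end Digits

-- ##### zones #####
section Zones
variable {N : ℕ} [NeZero N]

noncomputable def lowFree (N : ℕ) [NeZero N] (Y : Finset (Fin N)) : Finset (Fin N) :=
  (Finset.univ.filter (fun x : Fin N => x.val < HH N)) \ Y

noncomputable def lL (N : ℕ) [NeZero N] (Y : Finset (Fin N)) : List (Fin N) :=
  (lowFree N Y).sort (· ≤ ·)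

noncomputable def zslot (N : ℕ) [NeZero N] (Y : Finset (Fin N)) (idx : ℕ) : Fin N :=
  (lL N Y).getD idx (emb N 0)

lemma lowfilter_card (hN : 2^150 ≤ N) :
    (Finset.univ.filter (fun x : Fin N => x.val < HH N)).card = HH N := by
  have hHle := M_HH_le hN
  have key : (Finset.univ.filter (fun x : Fin N => x.val < HH N)).card
      = (Finset.range (HH N)).card := by
    apply Finset.card_bij (fun (x : Fin N) _ => x.val)
    · intro x hx
      simp only [Finset.mem_filter] at hx
      exact Finset.mem_range.mpr hx.2
    · intro x hx y hy h
      exact Fin.val_injective h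
    · intro a ha
      rw [Finset.mem_range] at ha
      refine ⟨emb N a, ?_, ?_⟩
      · simp only [Finset.mem_filter]
        refine ⟨Finset.mem_univ _, ?_⟩
        rw [emb_val N (by omega)]
        exact ha
      · rw [emb_val N (by omega)]
  rw [key, Finset.card_range]

lemma lL_length (hN : 2^150 ≤ N) {Y : Finset (Fin N)} (hY : Y.card = kk N) :
    ZT N ≤ (lL N Y).length := by
  rw [lL, Finset.length_sort]
  have h1 := Finset.card_le_card_sdiff_add_card
    (s := (Finset.univ.filter (fun x : Fin N => x.val < HH N))) (t := Y)
  rw [lowfilter_card hN] at h1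
  have : HH N = ZT N + kk N := rfl
  simp only [lowFree]
  omega

lemma zslot_mem {Y : Finset (Fin N)} {idx : ℕ} (h : idx < (lL N Y).length) :
    zslot N Y idx ∈ lowFree N Y := by
  rw [zslot, List.getD_eq_getElem _ _ h]
  rw [← Finset.mem_sort (α := Fin N) (· ≤ ·)]
  exact List.getElem_mem _

lemma zslot_inj {Y : Finset (Fin N)} {idx idx' : ℕ}
    (h : idx < (lL N Y).length) (h' : idx' < (lL N Y).length)
    (heq : zslot N Y idx = zslot N Y idx') : idx = idx' := by
  simp only [zslot] at heq
  rw [List.getD_eq_getElem _ _ h, List.getD_eq_getElem _ _ h'] at heq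
  exact (List.Nodup.getElem_inj_iff (Finset.sort_nodup _ _)).mp heq

noncomputable def zoneF (N : ℕ) [NeZero N] (Y : Finset (Fin N)) (lvl : ℕ) (v : Fin N) :
    Finset (Fin N) :=
  (Finset.range (ss N)).image (fun b => zslot N Y (8 * ss N * lvl + 8*b + oct b v.val))

lemma zidx_lt {lvl b : ℕ} (hlvl : lvl < kk N) (hb : b < ss N) (d : ℕ) (hd : d < 8) :
    8 * ss N * lvl + 8*b + d < ZT N := by
  have h1 : 8 * ss N * (lvl + 1) ≤ 8 * ss N * kk N := Nat.mul_le_mul_left _ (by omega)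
  have h2 : 8 * ss N * (lvl+1) = 8 * ss N * lvl + 8 * ss N := by ring
  have : 8*b + d < 8 * ss N := by omega
  simp only [ZT]
  omega

lemma zoneF_subset_lowFree (hN : 2^150 ≤ N) {Y : Finset (Fin N)} (hY : Y.card = kk N)
    {lvl : ℕ} (hlvl : lvl < kk N) (v : Fin N) : zoneF N Y lvl v ⊆ lowFree N Y := by
  intro x hx
  rw [zoneF, Finset.mem_image] at hx
  obtain ⟨b, hb, rfl⟩ := hx
  rw [Finset.mem_range] at hb
  apply zslot_mem
  calc 8 * ss N * lvl + 8*b + oct b v.val < ZT N := zidx_lt hlvl hb _ (oct_lt _ _)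
    _ ≤ (lL N Y).length := lL_length hN hY

lemma zoneF_card (Y : Finset (Fin N)) (lvl : ℕ) (v : Fin N) :
    (zoneF N Y lvl v).card ≤ ss N :=
  le_trans (Finset.card_image_le) (by rw [Finset.card_range])

lemma zoneF_sub_inj (hN : 2^150 ≤ N) {Y : Finset (Fin N)} (hY : Y.card = kk N)
    {lvl lvl' : ℕ} (hlvl : lvl < kk N) (hlvl' : lvl' < kk N) {v v' : Fin N}
    (hsub : zoneF N Y lvl v ⊆ zoneF N Y lvl' v') : lvl = lvl' ∧ v = v' := by
  have hlen := lL_length hN hY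
  have key : ∀ b < ss N, lvl = lvl' ∧ oct b v.val = oct b v'.val := by
    intro b hb
    have hx : zslot N Y (8 * ss N * lvl + 8*b + oct b v.val) ∈ zoneF N Y lvl' v' := by
      apply hsub
      rw [zoneF, Finset.mem_image]
      exact ⟨b, Finset.mem_range.mpr hb, rfl⟩
    rw [zoneF, Finset.mem_image] at hx
    obtain ⟨b', hb', heq⟩ := hx
    rw [Finset.mem_range] at hb'
    have hidx : 8 * ss N * lvl' + (8*b' + oct b' v'.val)
        = 8 * ss N * lvl + (8*b + oct b v.val) := by
      have := zslot_inj
        (lt_of_lt_of_le (by have := zidx_lt (N := N) hlvl' hb' (oct b' v'.val) (oct_lt _ _); omega) hlen)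
        (lt_of_lt_of_le (by have := zidx_lt (N := N) hlvl hb (oct b v.val) (oct_lt _ _); omega) hlen) heq
      omega
    have hss : 0 < ss N := by simp only [ss]; omega
    have hinner : 8*b + oct b v.val < 8 * ss N ∧ 8*b' + oct b' v'.val < 8 * ss N := by
      have := oct_lt b v.val; have := oct_lt b' v'.val
      omega
    have hd := decomp (L := 8 * ss N) hinner.2 hinner.1 hidx
    have hd2 := decomp (L := 8) (oct_lt _ _) (oct_lt _ _) hd.2
    obtain ⟨hb'b, hoct⟩ := hd2
    subst hb'b
    exact ⟨hd.1.symm, hoct.symm⟩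
  have hss : 0 < ss N := Nat.succ_pos _
  constructor
  · exact (key 0 hss).1
  · have hval : v.val = v'.val := by
      apply oct_inj (ss N)
      · exact lt_of_lt_of_le v.isLt (M_8ss hN)
      · exact lt_of_lt_of_le v'.isLt (M_8ss hN)
      · intro i hi; exact (key i hi).2
    exact Fin.val_injective hval

end Zones

-- ##### zone unions along lists, and the shrub map #####
section Tau
variable {N : ℕ} [NeZero N]

noncomputable def zonesF (N : ℕ) [NeZero N] (Y : Finset (Fin N)) (r : List (Fin N)) :
    Finset (Fin N) :=
  (Finset.range r.length).biUnion (fun i => zoneF N Y i (r.getD i (emb N 0)))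

lemma zonesF_mono {Y : Finset (Fin N)} {r r' : List (Fin N)} (hpre : r <+: r') :
    zonesF N Y r ⊆ zonesF N Y r' := by
  intro x hx
  rw [zonesF, Finset.mem_biUnion] at hx ⊢
  obtain ⟨i, hi, hx⟩ := hx
  rw [Finset.mem_range] at hi
  refine ⟨i, Finset.mem_range.mpr (lt_of_lt_of_le hi hpre.length_le), ?_⟩
  have : r.getD i (emb N 0) = r'.getD i (emb N 0) := by
    obtain ⟨t, rfl⟩ := hpre
    rw [List.getD_eq_getElem _ _ hi,
      List.getD_eq_getElem _ _ (lt_of_lt_of_le hi (by simp only [List.length_append]; omega))]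
    rw [List.getElem_append_left hi]
  rwa [this] at hx

lemma zonesF_subset_lowFree (hN : 2^150 ≤ N) {Y : Finset (Fin N)} (hY : Y.card = kk N)
    {r : List (Fin N)} (hr : r.length ≤ kk N) : zonesF N Y r ⊆ lowFree N Y := by
  intro x hx
  rw [zonesF, Finset.mem_biUnion] at hx
  obtain ⟨i, hi, hx⟩ := hx
  rw [Finset.mem_range] at hi
  exact zoneF_subset_lowFree hN hY (by omega) _ hx

lemma zonesF_card {Y : Finset (Fin N)} (r : List (Fin N)) :
    (zonesF N Y r).card ≤ r.length * ss N := by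
  calc (zonesF N Y r).card ≤ ∑ i ∈ Finset.range r.length, (zoneF N Y i (r.getD i (emb N 0))).card :=
        Finset.card_biUnion_le
    _ ≤ ∑ _i ∈ Finset.range r.length, ss N :=
        Finset.sum_le_sum (fun i _ => zoneF_card _ _ _)
    _ = r.length * ss N := by rw [Finset.sum_const, Finset.card_range, smul_eq_mul]

lemma zonesF_rev (hN : 2^150 ≤ N) {Y : Finset (Fin N)} (hY : Y.card = kk N)
    {r r' : List (Fin N)} (hr : r.length ≤ kk N) (hr' : r'.length ≤ kk N)
    (hsub : zonesF N Y r ⊆ zonesF N Y r') :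
    r.length ≤ r'.length ∧ ∀ i < r.length, r.getD i (emb N 0) = r'.getD i (emb N 0) := by
  have hss : 0 < ss N := Nat.succ_pos _
  have key : ∀ i < r.length, i < r'.length ∧ r.getD i (emb N 0) = r'.getD i (emb N 0) := by
    intro i hi
    have hzone : zoneF N Y i (r.getD i (emb N 0)) ⊆ zonesF N Y r' := by
      intro x hx
      apply hsub
      rw [zonesF, Finset.mem_biUnion]
      exact ⟨i, Finset.mem_range.mpr hi, hx⟩
    have main : ∀ x ∈ zoneF N Y i (r.getD i (emb N 0)),
        x ∈ zoneF N Y i (r'.getD i (emb N 0)) ∧ i < r'.length := by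
      intro x hx
      have hx2 := hzone hx
      rw [zonesF, Finset.mem_biUnion] at hx2
      obtain ⟨i', hi', hx2⟩ := hx2
      rw [Finset.mem_range] at hi'
      rw [zoneF, Finset.mem_image] at hx hx2
      obtain ⟨b, hb, hxb⟩ := hx
      obtain ⟨b', hb', hxb'⟩ := hx2
      rw [Finset.mem_range] at hb hb'
      have hlen := lL_length hN hY
      have hidx : 8 * ss N * i' + (8*b' + oct b' (r'.getD i' (emb N 0)).val)
          = 8 * ss N * i + (8*b + oct b (r.getD i (emb N 0)).val) := by
        have := zslot_inj
          (lt_of_lt_of_le (by have := zidx_lt (N := N) (lvl := i') (by omega) hb' (oct b' (r'.getD i' (emb N 0)).val) (oct_lt _ _); omega) hlen)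
          (lt_of_lt_of_le (by have := zidx_lt (N := N) (lvl := i) (by omega) hb (oct b (r.getD i (emb N 0)).val) (oct_lt _ _); omega) hlen)
          (hxb'.trans hxb.symm)
        omega
      have hinner : 8*b + oct b (r.getD i (emb N 0)).val < 8 * ss N ∧
          8*b' + oct b' (r'.getD i' (emb N 0)).val < 8 * ss N := by
        have := oct_lt b (r.getD i (emb N 0)).val
        have := oct_lt b' (r'.getD i' (emb N 0)).val
        omega
      have hd := decomp (L := 8 * ss N) hinner.2 hinner.1 hidx
      have hii : i' = i := hd.1
      subst hii
      refine ⟨?_, hi'⟩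
      rw [zoneF, Finset.mem_image]
      exact ⟨b', Finset.mem_range.mpr hb', hxb'⟩
    have hmem0 : zslot N Y (8 * ss N * i + 8*0 + oct 0 (r.getD i (emb N 0)).val)
        ∈ zoneF N Y i (r.getD i (emb N 0)) := by
      rw [zoneF, Finset.mem_image]
      exact ⟨0, Finset.mem_range.mpr hss, rfl⟩
    have hi'len : i < r'.length := (main _ hmem0).2
    have hsub2 : zoneF N Y i (r.getD i (emb N 0)) ⊆ zoneF N Y i (r'.getD i (emb N 0)) :=
      fun x hx => (main x hx).1
    exact ⟨hi'len, (zoneF_sub_inj hN hY (by omega) (by omega) hsub2).2⟩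
  constructor
  · rcases Nat.eq_zero_or_pos r.length with h0 | h0
    · omega
    · have := (key (r.length - 1) (by omega)).1; omega
  · intro i hi; exact (key i hi).2

noncomputable def tau (N : ℕ) [NeZero N] (f : Finset (Fin N) × Fin N → Finset (Fin N))
    (Y : Finset (Fin N)) : List (Fin N) → Finset (Fin N)
  | [] => ∅
  | v :: r => (v :: r).toFinset ∪ (f (Y, v) ∪ zonesF N Y r)

variable {f : Finset (Fin N) × Fin N → Finset (Fin N)}

def Hf1 (N : ℕ) [NeZero N] (f : Finset (Fin N) × Fin N → Finset (Fin N)) : Prop :=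
  ∀ p, ∀ x ∈ f p, x ∉ p.1 ∧ HH N ≤ x.val

def Hf2 (N : ℕ) [NeZero N] (f : Finset (Fin N) × Fin N → Finset (Fin N)) : Prop :=
  ∀ p q : Finset (Fin N) × Fin N, p.1.card = kk N → q.1.card = kk N → p ≠ q →
    DD N < ((f p) \ (f q)).card

lemma ordsubset_length {Y : Finset (Fin N)} {S : List (Fin N)} (hS : OrdSubset Y S)
    (hY : Y.card = kk N) : S.length ≤ kk N := by
  have h1 : S.toFinset ⊆ Y := fun x hx => hS.2 x (List.mem_toFinset.mp hx)
  have h2 := Finset.card_le_card h1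
  rw [List.toFinset_card_of_nodup hS.1] at h2
  omega

lemma tau_inter (hN : 2^150 ≤ N) {Y : Finset (Fin N)} (hY : Y.card = kk N)
    (hf1 : Hf1 N f) {S : List (Fin N)} (hS : OrdSubset Y S) :
    tau N f Y S ∩ Y = S.toFinset := by
  cases S with
  | nil => simp [tau]
  | cons v r =>
    have hlen : (v :: r).length ≤ kk N := ordsubset_length hS hY
    ext x
    simp only [tau, Finset.mem_inter, Finset.mem_union]
    constructor
    · rintro ⟨h1 | h1 | h1, h2⟩
      · exact h1
      · exact absurd h2 (hf1 (Y, v) x h1).1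
      · have := zonesF_subset_lowFree hN hY (r := r) (by simp at hlen; omega) h1
        rw [lowFree, Finset.mem_sdiff] at this
        exact absurd h2 this.2
    · intro h
      exact ⟨Or.inl h, hS.2 x (List.mem_toFinset.mp h)⟩

lemma tau_mono {Y : Finset (Fin N)} {S T : List (Fin N)} (hpre : S <+: T) :
    tau N f Y S ⊆ tau N f Y T := by
  cases S with
  | nil => simp [tau]
  | cons v r =>
    obtain ⟨t, rfl⟩ := hpre
    show tau N f Y (v :: r) ⊆ tau N f Y (v :: (r ++ t))
    simp only [tau]
    apply Finset.union_subset_union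
    · intro x hx
      rw [List.mem_toFinset, List.mem_cons] at hx
      rw [List.mem_toFinset, List.mem_cons, List.mem_append]
      tauto
    · exact Finset.union_subset_union (le_refl _) (zonesF_mono ⟨t, rfl⟩)

lemma tau_rev (hN : 2^150 ≤ N) {Y : Finset (Fin N)} (hY : Y.card = kk N)
    (hf1 : Hf1 N f) (hf2 : Hf2 N f) {S T : List (Fin N)}
    (hS : OrdSubset Y S) (hT : OrdSubset Y T)
    (hsub : tau N f Y S ⊆ tau N f Y T) : S <+: T := by
  cases S with
  | nil => exact List.nil_prefix
  | cons v r =>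
    cases T with
    | nil =>
      exfalso
      have : v ∈ tau N f Y (v :: r) := by
        simp [tau, List.mem_toFinset]
      have h2 := hsub this
      simp [tau] at h2
    | cons w r' =>
      have hlenS : (v :: r).length ≤ kk N := ordsubset_length hS hY
      have hlenT : (w :: r').length ≤ kk N := ordsubset_length hT hY
      have hrlen : r.length ≤ kk N := by simp at hlenS; omega
      have hr'len : r'.length ≤ kk N := by simp at hlenT; omega
      -- f part
      have hfsub : f (Y, v) ⊆ f (Y, w) := by
        intro x hx
        have hxY := (hf1 (Y, v) x hx).1
        have hxH := (hf1 (Y, v) x hx).2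
        have h2 : x ∈ tau N f Y (w :: r') := hsub (by
          simp only [tau, Finset.mem_union]; exact Or.inr (Or.inl hx))
        simp only [tau, Finset.mem_union] at h2
        rcases h2 with h | h | h
        · exact absurd (hT.2 x (List.mem_toFinset.mp h)) hxY
        · exact h
        · exfalso
          have := zonesF_subset_lowFree hN hY hr'len h
          rw [lowFree, Finset.mem_sdiff, Finset.mem_filter] at this
          omega
      have hvw : v = w := by
        by_contra hne
        have := hf2 (Y, v) (Y, w) hY hY (by simp [hne])
        rw [Finset.sdiff_eq_empty_iff_subset.mpr hfsub] at this
        simp at this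
      -- zones part
      have hzsub : zonesF N Y r ⊆ zonesF N Y r' := by
        intro x hx
        have hxlow := zonesF_subset_lowFree hN hY hrlen hx
        rw [lowFree, Finset.mem_sdiff, Finset.mem_filter] at hxlow
        have h2 : x ∈ tau N f Y (w :: r') := hsub (by
          simp only [tau, Finset.mem_union]; exact Or.inr (Or.inr hx))
        simp only [tau, Finset.mem_union] at h2
        rcases h2 with h | h | h
        · exact absurd (hT.2 x (List.mem_toFinset.mp h)) hxlow.2
        · exact absurd (hf1 (Y, w) x h).2 (by omega)
        · exact h
      obtain ⟨hlen, hgetD⟩ := zonesF_rev hN hY hrlen hr'len hzsub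
      have hrr' : r <+: r' := by
        have hre : r = r'.take r.length := by
          apply List.ext_getElem
          · rw [List.length_take]; omega
          · intro i h1 h2
            have := hgetD i h1
            rw [List.getD_eq_getElem _ _ h1, List.getD_eq_getElem _ _ (by omega)] at this
            rw [List.getElem_take]
            exact this
        rw [hre]
        exact List.take_prefix _ _
      rw [List.cons_prefix_cons]
      exact ⟨hvw, hrr'⟩

lemma tau_cross (hN : 2^150 ≤ N) {Y Y' : Finset (Fin N)}
    (hY : Y.card = kk N) (hY' : Y'.card = kk N)
    (hf1 : Hf1 N f) (hf2 : Hf2 N f) {S T : List (Fin N)}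
    (hS : OrdSubset Y S) (hT : OrdSubset Y' T) (hSne : S ≠ [])
    (hsub : tau N f Y S ⊆ tau N f Y' T) : Y = Y' ∧ S <+: T := by
  cases S with
  | nil => exact absurd rfl hSne
  | cons v r =>
    cases T with
    | nil =>
      exfalso
      have : v ∈ tau N f Y (v :: r) := by simp [tau, List.mem_toFinset]
      have h2 := hsub this
      simp [tau] at h2
    | cons w r' =>
      have hlenT : (w :: r').length ≤ kk N := ordsubset_length hT hY'
      have hr'len : r'.length ≤ kk N := by simp at hlenT; omega
      -- difference of f parts is inside the small junk
      have hdiff : f (Y, v) \ f (Y', w) ⊆ (w :: r').toFinset ∪ zonesF N Y' r' := by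
        intro x hx
        rw [Finset.mem_sdiff] at hx
        have h2 : x ∈ tau N f Y' (w :: r') := hsub (by
          simp only [tau, Finset.mem_union]; exact Or.inr (Or.inl hx.1))
        simp only [tau, Finset.mem_union] at h2
        rcases h2 with h | h | h
        · exact Finset.mem_union_left _ h
        · exact absurd h hx.2
        · exact Finset.mem_union_right _ h
      have hjunk : ((w :: r').toFinset ∪ zonesF N Y' r').card ≤ DD N := by
        calc ((w :: r').toFinset ∪ zonesF N Y' r').card
            ≤ (w :: r').toFinset.card + (zonesF N Y' r').card := Finset.card_union_le _ _
          _ ≤ kk N + r'.length * ss N := by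
              apply Nat.add_le_add
              · calc (w :: r').toFinset.card ≤ (w :: r').length := List.toFinset_card_le _
                  _ ≤ kk N := hlenT
              · exact zonesF_card _
          _ ≤ DD N := by
              simp only [DD]
              have h1 : r'.length * ss N ≤ kk N * ss N := by
                apply Nat.mul_le_mul_right
                simp at hlenT; omega
              omega
      have heq : (Y, v) = (Y', w) := by
        by_contra hne
        have h1 := hf2 (Y, v) (Y', w) hY hY' hne
        have h2 := le_trans (Finset.card_le_card hdiff) hjunk
        omega
      have hYY : Y = Y' := congrArg Prod.fst heq
      have hvw : v = w := congrArg Prod.snd heq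
      subst hYY
      exact ⟨rfl, tau_rev hN hY hf1 hf2 hS hT hsub⟩

end Tau

-- ##### coloring and final assembly #####
section Final
variable {N : ℕ} [NeZero N] {f : Finset (Fin N) × Fin N → Finset (Fin N)}

def isBlue (N : ℕ) [NeZero N] (f : Finset (Fin N) × Fin N → Finset (Fin N))
    (A : Finset (Fin N)) : Prop :=
  A = ∅ ∨ ∃ Y : Finset (Fin N), Y.card = kk N ∧
    ∃ S : List (Fin N), OrdSubset Y S ∧ A = tau N f Y S

open Classical in
noncomputable def col (N : ℕ) [NeZero N] (f : Finset (Fin N) × Fin N → Finset (Fin N)) :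
    Finset (Fin N) → Bool :=
  fun A => if isBlue N f A then true else false

lemma col_iff {A : Finset (Fin N)} : col N f A = true ↔ isBlue N f A := by
  classical
  by_cases h : isBlue N f A <;> simp [col, h]

lemma noBlueLambda (hN : 2^150 ≤ N) (hf1 : Hf1 N f) (hf2 : Hf2 N f) :
    NoBlueLambda (col N f) := by
  rintro ⟨A, B, C, hA, hB, hC, hAC, hBC, hAB, hBA⟩
  rw [col_iff] at hA hB hC
  rcases hA with rfl | ⟨Y1, hY1, S1, hS1, rfl⟩
  · exact hAB (Finset.empty_subset _)
  rcases hB with rfl | ⟨Y2, hY2, S2, hS2, rfl⟩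
  · exact hBA (Finset.empty_subset _)
  rcases hC with rfl | ⟨Y3, hY3, U, hU, rfl⟩
  · exact (Finset.not_ssubset_empty _) hAC
  have hS1ne : S1 ≠ [] := by
    rintro rfl
    exact hAB (by simp [tau])
  have hS2ne : S2 ≠ [] := by
    rintro rfl
    exact hBA (by simp [tau])
  obtain ⟨hYe1, hp1⟩ := tau_cross hN hY1 hY3 hf1 hf2 hS1 hU hS1ne hAC.subset
  obtain ⟨hYe2, hp2⟩ := tau_cross hN hY2 hY3 hf1 hf2 hS2 hU hS2ne hBC.subset
  subst hYe1; subst hYe2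
  rcases List.prefix_or_prefix_of_prefix hp1 hp2 with h | h
  · exact hAB (tau_mono h)
  · exact hBA (tau_mono h)

lemma blueShrub (hN : 2^150 ≤ N) (hf1 : Hf1 N f) (hf2 : Hf2 N f)
    {Y : Finset (Fin N)} (hY : Y.card = kk N) : BlueYShrub (col N f) Y := by
  refine ⟨tau N f Y, ⟨?_, ?_⟩, ?_⟩
  · intro S T hS hT
    exact ⟨fun h => tau_mono h, fun h => tau_rev hN hY hf1 hf2 hS hT h⟩
  · intro S hS
    exact tau_inter hN hY hf1 hS
  · intro S hS
    rw [col_iff]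
    exact Or.inr ⟨Y, hY, S, hS, rfl⟩

end Final
end S19


/-- There is `N0` such that for all `N ≥ N0`, with
`k = ⌊(10/216) · N / ln N⌋`, there is a blue/red coloring of `Q([N])` with no blue copy
of `Λ` such that for every `k`-element subset `Y ⊆ [N]` there is a blue `Y`-shrub. -/
theorem statement19 :
    ∃ N0 : ℕ, ∀ N : ℕ, N ≥ N0 →
      ∃ c : Finset (Fin N) → Bool,
        NoBlueLambda c ∧
        ∀ Y : Finset (Fin N),
          Y.card = ⌊(10 / 216 : ℝ) * (N / Real.log N)⌋₊ → BlueYShrub c Y := by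
  refine ⟨2^150, ?_⟩
  intro N hge
  haveI : NeZero N := ⟨by
    have h : (0:ℕ) < 2^150 := Nat.pow_pos (by norm_num)
    omega⟩
  obtain ⟨f, hf1, hf2⟩ := S19.exists_big (N := N) hge
  exact ⟨S19.col N f, S19.noBlueLambda hge hf1 hf2,
    fun Y hY => S19.blueShrub hge hf1 hf2 hY⟩
end
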